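/- arXiv:0912.4571 — 8 statements merged into one kernel-verified Lean document; each statement's English description precedes it below -/
import Mathlib

section
/- Let φ, ψ : ℝⁿ → ℝ be convex functions, let γ_ψ(v) be a subgradient of ψ at v, and for μ > 0 define Q_ψ(u,v) = φ(u) + ψ(v) + ⟨γ_ψ(v), u − v⟩ + (1/(2μ))‖u − v‖². Let p_ψ(v) be a minimizer of u ↦ Q_ψ(u,v) and let Φ = φ + ψ. If Φ(p_ψ(v)) ≤ Q_ψ(p_ψ(v), v), then for every u, 2μ(Φ(u) − Φ(p_ψ(v))) ≥ ‖p_ψ(v) − u‖² − ‖v − u‖². -/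
open scoped RealInnerProductSpace

lemma comb_norm_sq {E : Type*} [NormedAddCommGroup E] [InnerProductSpace ℝ E]
    (a b : E) (t : ℝ) :
    ‖(1 - t) • a + t • b‖ ^ 2
      = (1 - t) * ‖a‖ ^ 2 + t * ‖b‖ ^ 2 - t * (1 - t) * ‖a - b‖ ^ 2 := by
  have h1 : ‖(1 - t) • a + t • b‖ ^ 2 = ⟪(1 - t) • a + t • b, (1 - t) • a + t • b⟫ :=
    (real_inner_self_eq_norm_sq _).symm
  have hab : ‖a - b‖ ^ 2 = ‖a‖ ^ 2 - 2 * ⟪a, b⟫ + ‖b‖ ^ 2 := by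
    rw [← real_inner_self_eq_norm_sq, ← real_inner_self_eq_norm_sq, ← real_inner_self_eq_norm_sq]
    simp [inner_sub_left, inner_sub_right, real_inner_comm]
    linarith [norm_sub_sq_real a b]
  rw [h1, hab]
  simp only [inner_add_left, inner_add_right, real_inner_smul_left, real_inner_smul_right,
    real_inner_self_eq_norm_sq, real_inner_comm a b, norm_smul, Real.norm_eq_abs, mul_pow,
    sq_abs]
  ring

/-- Lemma 2.1 (generalization of Beck–Teboulle Lemma 2.3): if the full objective at the
proximal-linearized minimizer is below the model value, then a quadratic decrease holds. -/
theorem alm_key_lemma {n : ℕ} (φ ψ : EuclideanSpace ℝ (Fin n) → ℝ)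
    (hφ : ConvexOn ℝ Set.univ φ) (hψ : ConvexOn ℝ Set.univ ψ)
    (μ : ℝ) (hμ : 0 < μ)
    (v γ : EuclideanSpace ℝ (Fin n))
    -- γ is a subgradient of ψ at v
    (hγ : ∀ u, ψ v + ⟪γ, u - v⟫ ≤ ψ u)
    (Q : EuclideanSpace ℝ (Fin n) → ℝ)
    (hQ : ∀ u, Q u = φ u + ψ v + ⟪γ, u - v⟫ + ‖u - v‖ ^ 2 / (2 * μ))
    -- p is a minimizer of Q(·, v)
    (p : EuclideanSpace ℝ (Fin n)) (hp : ∀ u, Q p ≤ Q u)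
    -- Φ(p) ≤ Q(p, v)
    (hcond : φ p + ψ p ≤ Q p) :
    ∀ u, ‖p - u‖ ^ 2 - ‖v - u‖ ^ 2 ≤ 2 * μ * ((φ u + ψ u) - (φ p + ψ p)) := by
  intro u
  -- strong convexity step: for t ∈ (0,1),
  have key : ∀ t : ℝ, 0 < t → t < 1 →
      Q p + (1 - t) * ‖u - p‖ ^ 2 / (2 * μ) ≤ Q u := by
    intro t ht ht1
    set w : EuclideanSpace ℝ (Fin n) := (1 - t) • p + t • u with hw
    have hQw := hp w
    have hφw : φ w ≤ (1 - t) * φ p + t * φ u :=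
      hφ.2 (Set.mem_univ p) (Set.mem_univ u) (by linarith) (le_of_lt ht) (by ring)
    have hinner : ⟪γ, w - v⟫ = (1 - t) * ⟪γ, p - v⟫ + t * ⟪γ, u - v⟫ := by
      have : w - v = (1 - t) • (p - v) + t • (u - v) := by
        rw [hw]
        module
      rw [this, inner_add_right, real_inner_smul_right, real_inner_smul_right]
    have hnorm : ‖w - v‖ ^ 2
        = (1 - t) * ‖p - v‖ ^ 2 + t * ‖u - v‖ ^ 2 - t * (1 - t) * ‖(p - v) - (u - v)‖ ^ 2 := by
      have : w - v = (1 - t) • (p - v) + t • (u - v) := by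
        rw [hw]; module
      rw [this, comb_norm_sq]
    have hpu : ‖(p - v) - (u - v)‖ = ‖u - p‖ := by
      rw [show (p - v) - (u - v) = -(u - p) by abel, norm_neg]
    rw [hpu] at hnorm
    have hQwval : Q w ≤ (1 - t) * Q p + t * Q u - t * (1 - t) * ‖u - p‖ ^ 2 / (2 * μ) := by
      rw [hQ w, hQ p, hQ u, hinner, hnorm]
      have h2μ : 0 < 2 * μ := by linarith
      have hsplit : ((1 - t) * ‖p - v‖ ^ 2 + t * ‖u - v‖ ^ 2 - t * (1 - t) * ‖u - p‖ ^ 2) / (2 * μ)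
          = (1 - t) * (‖p - v‖ ^ 2 / (2 * μ)) + t * (‖u - v‖ ^ 2 / (2 * μ))
            - t * (1 - t) * ‖u - p‖ ^ 2 / (2 * μ) := by
        field_simp
      rw [hsplit]
      linarith [hφw]
    have hle := le_trans hQw hQwval
    have h2μ : 0 < 2 * μ := by linarith
    have hmul : t * (Q p + (1 - t) * ‖u - p‖ ^ 2 / (2 * μ)) ≤ t * Q u := by
      have e1 : t * (1 - t) * ‖u - p‖ ^ 2 / (2 * μ)
          = t * ((1 - t) * ‖u - p‖ ^ 2 / (2 * μ)) := by ring
      rw [e1] at hle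
      nlinarith [hle]
    exact le_of_mul_le_mul_left hmul ht
  have hstrong : Q p + ‖u - p‖ ^ 2 / (2 * μ) ≤ Q u := by
    have h2μ : 0 < 2 * μ := by linarith
    set c : ℝ := ‖u - p‖ ^ 2 / (2 * μ) with hc
    have hc0 : 0 ≤ c := div_nonneg (sq_nonneg _) (le_of_lt h2μ)
    refine le_of_forall_pos_le_add ?_
    intro ε hε
    set t : ℝ := min (1/2) (ε / (c + 1)) with htdef
    have ht0 : 0 < t := lt_min (by norm_num) (div_pos hε (by linarith))
    have ht1 : t < 1 := lt_of_le_of_lt (min_le_left _ _) (by norm_num)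
    have hk := key t ht0 ht1
    have htc : t * c ≤ ε := by
      have h1 : t ≤ ε / (c + 1) := min_le_right _ _
      have : t * c ≤ (ε / (c + 1)) * c := by nlinarith
      calc t * c ≤ (ε / (c + 1)) * c := this
        _ ≤ ε := by
          rw [div_mul_eq_mul_div, div_le_iff₀ (by linarith : (0:ℝ) < c + 1)]
          nlinarith
    have : Q p + (1 - t) * ‖u - p‖ ^ 2 / (2 * μ) = Q p + c - t * c := by
      rw [hc]; ring
    linarith [hk, htc, this ▸ hk]
  -- combine
  have hup : Q u ≤ φ u + ψ u + ‖u - v‖ ^ 2 / (2 * μ) := by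
    rw [hQ u]
    have := hγ u
    linarith
  have hfinal : φ p + ψ p + ‖u - p‖ ^ 2 / (2 * μ) ≤ φ u + ψ u + ‖u - v‖ ^ 2 / (2 * μ) := by
    linarith
  have h2μ : 0 < 2 * μ := by linarith
  have hnp : ‖p - u‖ = ‖u - p‖ := norm_sub_rev _ _
  have hnv : ‖v - u‖ = ‖u - v‖ := norm_sub_rev _ _
  rw [hnp, hnv]
  have hdiv : (‖u - p‖ ^ 2 - ‖u - v‖ ^ 2) / (2 * μ) ≤ (φ u + ψ u) - (φ p + ψ p) := by
    rw [sub_div]; linarith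
  rw [div_le_iff₀ h2μ] at hdiv
  linarith
end

section
/- Under the assumptions of the ALM-S convergence theorem (f convex differentiable with L(f)-Lipschitz gradient, g convex, μ ≤ 1/L(f)), the sequences of objective values F(x^n) and F(y^n) generated by the alternating linearization method with skipping steps are non-increasing, and moreover F(y^n) ≤ F(x^n) for all n. -/
open scoped RealInnerProductSpace

lemma descent_lemma {E : Type*} [NormedAddCommGroup E] [InnerProductSpace ℝ E] [CompleteSpace E]
    (f : E → ℝ) (f' : E → E) (hf' : ∀ x, HasGradientAt f (f' x) x)
    (Lf : ℝ) (hLf : 0 ≤ Lf) (hlip : ∀ a b, ‖f' a - f' b‖ ≤ Lf * ‖a - b‖)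
    (u v : E) : f u ≤ f v + ⟪f' v, u - v⟫ + Lf / 2 * ‖u - v‖ ^ 2 := by
  set d := u - v with hd
  have hline : ∀ t : ℝ, HasDerivAt (fun t : ℝ => v + t • d) d t := by
    intro t
    simpa using ((hasDerivAt_id t).smul_const d).const_add v
  have hφ : ∀ t : ℝ, HasDerivAt (fun t : ℝ => f (v + t • d)) ⟪f' (v + t • d), d⟫ t := by
    intro t
    have h1 := ((hf' (v + t • d)).hasFDerivAt).comp_hasDerivAt t (hline t)
    exact h1
  set ψ : ℝ → ℝ := fun t => f (v + t • d) - t * ⟪f' v, d⟫ - t ^ 2 * (Lf / 2 * ‖d‖ ^ 2) with hψdef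
  have hψ : ∀ t : ℝ, HasDerivAt ψ
      (⟪f' (v + t • d), d⟫ - ⟪f' v, d⟫ - 2 * t * (Lf / 2 * ‖d‖ ^ 2)) t := by
    intro t
    have h2 : HasDerivAt (fun t : ℝ => t * ⟪f' v, d⟫) ⟪f' v, d⟫ t := by
      simpa using (hasDerivAt_id t).mul_const ⟪f' v, d⟫
    have h3 : HasDerivAt (fun t : ℝ => t ^ 2 * (Lf / 2 * ‖d‖ ^ 2)) (2 * t * (Lf / 2 * ‖d‖ ^ 2)) t := by
      have := (hasDerivAt_pow 2 t).mul_const (Lf / 2 * ‖d‖ ^ 2)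
      simpa [mul_comm] using this
    exact ((hφ t).sub h2).sub h3
  have hanti : AntitoneOn ψ (Set.Icc (0:ℝ) 1) := by
    apply antitoneOn_of_deriv_nonpos (convex_Icc 0 1)
    · exact Continuous.continuousOn (by
        exact continuous_iff_continuousAt.2 fun t => (hψ t).continuousAt)
    · intro t _
      exact (hψ t).differentiableAt.differentiableWithinAt
    · intro t ht
      rw [interior_Icc] at ht
      rw [(hψ t).deriv]
      have hti : ⟪f' (v + t • d) - f' v, d⟫ ≤ ‖f' (v + t • d) - f' v‖ * ‖d‖ :=
        real_inner_le_norm _ _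
      have hlb : ‖f' (v + t • d) - f' v‖ ≤ Lf * (t * ‖d‖) := by
        have := hlip (v + t • d) v
        simpa [norm_smul, abs_of_nonneg ht.1.le] using this
      have h0 : ⟪f' (v + t • d), d⟫ - ⟪f' v, d⟫ ≤ Lf * (t * ‖d‖) * ‖d‖ := by
        rw [← inner_sub_left]
        exact hti.trans (mul_le_mul_of_nonneg_right hlb (norm_nonneg d))
      have : 2 * t * (Lf / 2 * ‖d‖ ^ 2) = Lf * (t * ‖d‖) * ‖d‖ := by ring
      linarith
  have h01 := hanti (Set.left_mem_Icc.2 zero_le_one) (Set.right_mem_Icc.2 zero_le_one) zero_le_one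
  have hψ0 : ψ 0 = f v := by simp [hψdef]
  have hψ1 : ψ 1 = f u - ⟪f' v, d⟫ - Lf / 2 * ‖d‖ ^ 2 := by
    simp [hψdef, hd]
  rw [hψ0, hψ1] at h01
  linarith

/-- Monotonicity of objective values in the alternating linearization method with skipping steps (ALM-S).
`S k = true` marks a regular (non-skipped) iteration; `S k = false` marks a skipped one. -/
theorem alms_monotone {n : ℕ}
    (f g : EuclideanSpace ℝ (Fin n) → ℝ)
    (f' : EuclideanSpace ℝ (Fin n) → EuclideanSpace ℝ (Fin n))
    (hf : ConvexOn ℝ Set.univ f) (hg : ConvexOn ℝ Set.univ g)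
    (hf' : ∀ x, HasGradientAt f (f' x) x)
    (Lf μ : ℝ) (hLf : 0 < Lf)
    (hlip : ∀ a b, ‖f' a - f' b‖ ≤ Lf * ‖a - b‖)
    (hμ0 : 0 < μ) (hμ : μ ≤ 1 / Lf)
    -- the augmented Lagrangian L_μ(x, y; λ) and the model Q_f(u, v)
    (Lmu : EuclideanSpace ℝ (Fin n) → EuclideanSpace ℝ (Fin n) → EuclideanSpace ℝ (Fin n) → ℝ)
    (hLmu : ∀ x y lam, Lmu x y lam =
      f x + g y - ⟪lam, x - y⟫ + ‖x - y‖ ^ 2 / (2 * μ))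
    (Qf : EuclideanSpace ℝ (Fin n) → EuclideanSpace ℝ (Fin n) → ℝ)
    (hQf : ∀ u v, Qf u v = g u + f v + ⟪f' v, u - v⟫ + ‖u - v‖ ^ 2 / (2 * μ))
    -- the iterates
    (x y lam : ℕ → EuclideanSpace ℝ (Fin n)) (S : ℕ → Bool)
    (hx0 : x 0 = y 0)
    -- regular step: x^{k+1} minimizes L_μ(·, yᵏ; λᵏ) and the skipping test fails
    (hreg : ∀ k, S k = true →
      (∀ w, Lmu (x (k + 1)) (y k) (lam k) ≤ Lmu w (y k) (lam k)) ∧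
      f (x (k + 1)) + g (x (k + 1)) ≤ Lmu (x (k + 1)) (y k) (lam k))
    -- skipped step: x^{k+1} := yᵏ
    (hskip : ∀ k, S k = false → x (k + 1) = y k)
    -- y^{k+1} minimizes Q_f(·, x^{k+1})
    (hy : ∀ k w, Qf (y (k + 1)) (x (k + 1)) ≤ Qf w (x (k + 1)))
    -- multiplier update
    (hlam : ∀ k, lam (k + 1) = f' (x (k + 1)) - μ⁻¹ • (x (k + 1) - y (k + 1)))
    :
    ∀ k : ℕ,
      f (x (k + 1)) + g (x (k + 1)) ≤ f (x k) + g (x k) ∧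
      f (y (k + 1)) + g (y (k + 1)) ≤ f (y k) + g (y k) ∧
      f (y k) + g (y k) ≤ f (x k) + g (x k) := by

  have hLμ : Lf ≤ 1 / μ := by
    rw [le_div_iff₀ hμ0]
    rw [le_div_iff₀ hLf] at hμ
    linarith [mul_comm Lf μ]
  have F := fun z => f z + g z
  -- Step A: F(y (k+1)) ≤ F(x (k+1))
  have stepA : ∀ k, f (y (k + 1)) + g (y (k + 1)) ≤ f (x (k + 1)) + g (x (k + 1)) := by
    intro k
    have hdesc := descent_lemma f f' hf' Lf hLf.le hlip (y (k + 1)) (x (k + 1))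
    have hq : Qf (y (k + 1)) (x (k + 1)) ≤ Qf (x (k + 1)) (x (k + 1)) := hy k _
    rw [hQf, hQf] at hq
    simp only [sub_self, inner_zero_right, norm_zero] at hq
    simp only [ne_eq, OfNat.ofNat_ne_zero, not_false_eq_true, zero_pow, zero_div, add_zero] at hq
    have hnn : (0:ℝ) ≤ ‖y (k + 1) - x (k + 1)‖ ^ 2 := by positivity
    have hq2 : Lf / 2 * ‖y (k + 1) - x (k + 1)‖ ^ 2 ≤ ‖y (k + 1) - x (k + 1)‖ ^ 2 / (2 * μ) := by
      rw [div_mul_eq_mul_div, div_le_div_iff₀ two_pos (by positivity)]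
      calc Lf * ‖y (k + 1) - x (k + 1)‖ ^ 2 * (2 * μ)
          ≤ (1 / μ) * ‖y (k + 1) - x (k + 1)‖ ^ 2 * (2 * μ) := by
            apply mul_le_mul_of_nonneg_right (mul_le_mul_of_nonneg_right hLμ hnn) (by positivity)
        _ = ‖y (k + 1) - x (k + 1)‖ ^ 2 * 2 := by field_simp
    have h0 : ‖y (k+1) - x (k+1)‖ ^ 2 / (2 * μ) ≥ 0 := by positivity
    linarith [hdesc, hq, hq2]
  -- Step B: F(x (k+1)) ≤ F(y k)
  have stepB : ∀ k, f (x (k + 1)) + g (x (k + 1)) ≤ f (y k) + g (y k) := by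
    intro k
    cases hS : S k with
    | false => rw [hskip k hS]
    | true =>
      obtain ⟨hmin, htest⟩ := hreg k hS
      have h1 : Lmu (x (k + 1)) (y k) (lam k) ≤ Lmu (y k) (y k) (lam k) := hmin _
      have h2 : Lmu (y k) (y k) (lam k) = f (y k) + g (y k) := by
        rw [hLmu]; simp
      linarith
  -- Step C: F(y k) ≤ F(x k)
  have stepC : ∀ k, f (y k) + g (y k) ≤ f (x k) + g (x k) := by
    intro k
    cases k with
    | zero => rw [hx0]
    | succ m => exact stepA m
  intro k
  exact ⟨(stepB k).trans (stepC k), (stepA k).trans (stepB k), stepC k⟩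
end

section
/- Let f, g : ℝⁿ → ℝ be convex and differentiable with ∇f and ∇g Lipschitz with constants L(f) and L(g). Fix 0 < μ ≤ min{1/L(f), 1/L(g)}. Define x^{k+1} = argmin_x Q_g(x, y^k) and y^{k+1} = argmin_y Q_f(y, x^{k+1}), where Q_f(u,v) = g(u)+f(v)+⟨∇f(v),u−v⟩+(1/(2μ))‖u−v‖² and Q_g(u,v) = f(u)+g(v)+⟨∇g(v),u−v⟩+(1/(2μ))‖u−v‖². Then for all k ≥ 1, F(y^k) − F(x*) ≤ ‖x⁰ − x*‖² / (4μk), where x* minimizes F = f+g and x⁰ = y⁰. -/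
open scoped RealInnerProductSpace
open Set

section aux

variable {E : Type*} [NormedAddCommGroup E] [InnerProductSpace ℝ E] [CompleteSpace E]

lemma line_hasDerivAt (h : E → ℝ) {G : E} (v d : E) (t : ℝ)
    (hh : HasGradientAt h G (v + t • d)) :
    HasDerivAt (fun s : ℝ => h (v + s • d)) ⟪G, d⟫ t := by
  have hc : HasDerivAt (fun s : ℝ => v + s • d) d t := by
    simpa using ((hasDerivAt_id t).smul_const d).const_add v
  have := hh.hasFDerivAt.comp_hasDerivAt t hc
  simpa [InnerProductSpace.toDual_apply_apply, Function.comp_def] using this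

lemma convex_first_order (h : E → ℝ) (G : E) (v w : E)
    (hconv : ConvexOn ℝ univ h) (hgrad : HasGradientAt h G v) :
    h v + ⟪G, w - v⟫ ≤ h w := by
  set d := w - v with hd
  have hφconv : ConvexOn ℝ univ (fun t : ℝ => h (v + t • d)) := by
    refine ⟨convex_univ, ?_⟩
    intro s _ t _ a b ha hb hab
    have hb' : b = 1 - a := by linarith
    subst hb'
    have key : v + (a * s + (1 - a) * t) • d = a • (v + s • d) + (1 - a) • (v + t • d) := by
      module
    simp only [smul_eq_mul]
    rw [key]
    have := hconv.2 (mem_univ (v + s • d)) (mem_univ (v + t • d)) ha hb hab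
    simpa [smul_eq_mul] using this
  have hder : HasDerivAt (fun s : ℝ => h (v + s • d)) ⟪G, d⟫ 0 :=
    line_hasDerivAt h v d 0 (by simpa using hgrad)
  have := hφconv.le_slope_of_hasDerivAt (mem_univ (0:ℝ)) (mem_univ (1:ℝ)) one_pos hder
  rw [slope_def_field] at this
  simp only [zero_smul, add_zero, one_smul] at this
  have hvd : v + d = w := by rw [hd]; abel
  rw [hvd] at this
  have : ⟪G, d⟫ ≤ h w - h v := by
    have h10 : ((1:ℝ) - 0) = 1 := by norm_num
    calc ⟪G, d⟫ ≤ (h w - h v) / (1 - 0) := this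
    _ = h w - h v := by norm_num
  linarith

lemma descent_lemma_s3 (h : E → ℝ) (h' : E → E) (hh : ∀ z, HasGradientAt h (h' z) z)
    (L : ℝ) (hL : 0 ≤ L) (hlip : ∀ a b, ‖h' a - h' b‖ ≤ L * ‖a - b‖) (u v : E) :
    h u ≤ h v + ⟪h' v, u - v⟫ + L / 2 * ‖u - v‖ ^ 2 := by
  set d := u - v with hd
  set ψ : ℝ → ℝ := fun t => h (v + t • d) - t * ⟪h' v, d⟫ - t ^ 2 * (L / 2 * ‖d‖ ^ 2) with hψ
  have hder : ∀ t : ℝ,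
      HasDerivAt ψ (⟪h' (v + t • d), d⟫ - ⟪h' v, d⟫ - 2 * t * (L / 2 * ‖d‖ ^ 2)) t := by
    intro t
    have h1 := line_hasDerivAt h v d t (hh _)
    have h2 : HasDerivAt (fun t : ℝ => t * ⟪h' v, d⟫) ⟪h' v, d⟫ t := by
      simpa using (hasDerivAt_id t).mul_const ⟪h' v, d⟫
    have h3 : HasDerivAt (fun t : ℝ => t ^ 2 * (L / 2 * ‖d‖ ^ 2))
        (2 * t * (L / 2 * ‖d‖ ^ 2)) t := by
      have := (hasDerivAt_pow 2 t).mul_const (L / 2 * ‖d‖ ^ 2)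
      simpa [mul_comm] using this
    exact (h1.sub h2).sub h3
  have hanti : AntitoneOn ψ (Icc (0:ℝ) 1) := by
    apply antitoneOn_of_deriv_nonpos (convex_Icc 0 1)
    · exact fun t _ => (hder t).differentiableAt.continuousAt.continuousWithinAt
    · exact fun t _ => (hder t).differentiableAt.differentiableWithinAt
    · intro t ht
      rw [interior_Icc] at ht
      rw [(hder t).deriv]
      have hb : ⟪h' (v + t • d), d⟫ - ⟪h' v, d⟫ ≤ L * t * ‖d‖ ^ 2 := by
        rw [← inner_sub_left]
        calc ⟪h' (v + t • d) - h' v, d⟫ ≤ ‖h' (v + t • d) - h' v‖ * ‖d‖ :=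
              real_inner_le_norm _ _
        _ ≤ (L * ‖(v + t • d) - v‖) * ‖d‖ := by
              apply mul_le_mul_of_nonneg_right (hlip _ _) (norm_nonneg _)
        _ = L * t * ‖d‖ ^ 2 := by
              have : (v + t • d) - v = t • d := by abel
              rw [this, norm_smul, Real.norm_eq_abs, abs_of_pos ht.1]; ring
      nlinarith [ht.1.le]
  have key := hanti (show (0:ℝ) ∈ Icc (0:ℝ) 1 by norm_num)
    (show (1:ℝ) ∈ Icc (0:ℝ) 1 by norm_num) zero_le_one
  have hψ0 : ψ 0 = h v := by simp [hψ]
  have hψ1 : ψ 1 = h u - ⟪h' v, d⟫ - L / 2 * ‖d‖ ^ 2 := by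
    have hvd : v + (1:ℝ) • d = u := by rw [one_smul, hd]; abel
    simp only [hψ, hvd, one_pow, one_mul]
  rw [hψ0, hψ1] at key
  linarith

lemma strong_min (f : E → ℝ) (hf : ConvexOn ℝ univ f) (c v : E) (μ : ℝ) (hμ : 0 < μ)
    (u : E)
    (hu : ∀ w, f u + ⟪c, u - v⟫ + ‖u - v‖ ^ 2 / (2 * μ) ≤
      f w + ⟪c, w - v⟫ + ‖w - v‖ ^ 2 / (2 * μ)) (w : E) :
    f u + ⟪c, u - v⟫ + ‖u - v‖ ^ 2 / (2 * μ) + ‖w - u‖ ^ 2 / (2 * μ) ≤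
      f w + ⟪c, w - v⟫ + ‖w - v‖ ^ 2 / (2 * μ) := by
  set p := u - v with hp
  set q := w - v with hq
  set C : ℝ := ‖w - u‖ ^ 2 / (2 * μ) with hC
  set A : ℝ := f u + ⟪c, p⟫ + ‖p‖ ^ 2 / (2 * μ) with hA
  set B : ℝ := f w + ⟪c, q⟫ + ‖q‖ ^ 2 / (2 * μ) with hB
  have hC0 : 0 ≤ C := by positivity
  have key : ∀ t : ℝ, t ∈ Ioo (0:ℝ) 1 → (1 - t) * C ≤ B - A := by
    intro t ht
    set z := u + t • (w - u) with hz
    have hz2 : z = (1 - t) • u + t • w := by rw [hz]; module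
    have hfz : f z ≤ (1 - t) * f u + t * f w := by
      rw [hz2]
      have := hf.2 (mem_univ u) (mem_univ w) (by linarith [ht.2] : (0:ℝ) ≤ 1 - t)
        ht.1.le (by ring)
      simpa [smul_eq_mul] using this
    have hzv : z - v = (1 - t) • p + t • q := by
      rw [hz, hp, hq]; module
    have hinner : ⟪c, z - v⟫ = (1 - t) * ⟪c, p⟫ + t * ⟪c, q⟫ := by
      rw [hzv, inner_add_right, real_inner_smul_right, real_inner_smul_right]
    have e2 : ‖w - u‖ ^ 2 = ‖p‖ ^ 2 - 2 * ⟪p, q⟫ + ‖q‖ ^ 2 := by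
      have hwu : w - u = q - p := by rw [hp, hq]; abel
      rw [hwu, norm_sub_sq_real, real_inner_comm]; ring
    have e1 : ‖z - v‖ ^ 2 =
        (1 - t) ^ 2 * ‖p‖ ^ 2 + 2 * ((1 - t) * t * ⟪p, q⟫) + t ^ 2 * ‖q‖ ^ 2 := by
      rw [hzv, norm_add_sq_real, real_inner_smul_left, real_inner_smul_right,
        norm_smul, norm_smul, Real.norm_eq_abs, Real.norm_eq_abs, mul_pow, mul_pow,
        sq_abs, sq_abs]
      ring
    have hnorm : ‖z - v‖ ^ 2 =
        (1 - t) * ‖p‖ ^ 2 + t * ‖q‖ ^ 2 - t * (1 - t) * ‖w - u‖ ^ 2 := by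
      rw [e1, e2]; ring
    have hmin := hu z
    rw [hinner, hnorm] at hmin
    have hdiv : ((1 - t) * ‖p‖ ^ 2 + t * ‖q‖ ^ 2 - t * (1 - t) * ‖w - u‖ ^ 2) / (2 * μ) =
        (1 - t) * (‖p‖ ^ 2 / (2 * μ)) + t * (‖q‖ ^ 2 / (2 * μ)) - t * (1 - t) * C := by
      rw [hC]; ring
    rw [hdiv] at hmin
    have comb : t * (A + (1 - t) * C) ≤ t * B := by
      rw [hA, hB]; nlinarith [hfz, hmin]
    have := (mul_le_mul_iff_right₀ ht.1).1 comb
    linarith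
  have main : C ≤ B - A := by
    apply le_of_forall_pos_le_add
    intro ε hε
    set t : ℝ := min (1/2) (ε / (C + 1)) with htdef
    have ht0 : 0 < t := by
      apply lt_min (by norm_num)
      positivity
    have ht1 : t < 1 := lt_of_le_of_lt (min_le_left _ _) (by norm_num)
    have hk := key t ⟨ht0, ht1⟩
    have htC : t * C ≤ ε := by
      have h1 : t ≤ ε / (C + 1) := min_le_right _ _
      have h2 : t * C ≤ (ε / (C + 1)) * C := mul_le_mul_of_nonneg_right h1 hC0
      have h3 : (ε / (C + 1)) * C ≤ ε := by
        rw [div_mul_eq_mul_div, div_le_iff₀ (by positivity : (0:ℝ) < C + 1)]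
        nlinarith
      linarith
    nlinarith [hk]
  linarith

lemma keyStep (f g : E → ℝ) (g' : E → E)
    (hf : ConvexOn ℝ univ f) (hg : ConvexOn ℝ univ g)
    (hg' : ∀ z, HasGradientAt g (g' z) z)
    (L μ : ℝ) (hL : 0 < L) (hlip : ∀ a b, ‖g' a - g' b‖ ≤ L * ‖a - b‖)
    (hμ0 : 0 < μ) (hμL : μ ≤ 1 / L)
    (u v : E)
    (hu : ∀ w, f u + ⟪g' v, u - v⟫ + ‖u - v‖ ^ 2 / (2 * μ) ≤
      f w + ⟪g' v, w - v⟫ + ‖w - v‖ ^ 2 / (2 * μ))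
    (w : E) :
    2 * μ * (f u + g u) + ‖w - u‖ ^ 2 ≤ 2 * μ * (f w + g w) + ‖w - v‖ ^ 2 := by
  have h1 := strong_min f hf (g' v) v μ hμ0 u hu w
  have h2 := descent_lemma_s3 g g' hg' L hL.le hlip u v
  have h3 := convex_first_order g (g' v) v w hg (hg' v)
  have hL' : L ≤ 1 / μ := by
    rw [le_div_iff₀ hμ0]
    rw [le_div_iff₀ hL] at hμL
    linarith
  have h4 : L / 2 * ‖u - v‖ ^ 2 ≤ ‖u - v‖ ^ 2 / (2 * μ) := by
    have hs : (0:ℝ) ≤ ‖u - v‖ ^ 2 := sq_nonneg _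
    have hLμ : L * μ ≤ 1 := by
      rw [le_div_iff₀ hL] at hμL; linarith
    rw [le_div_iff₀ (by positivity : (0:ℝ) < 2 * μ)]
    nlinarith [hs, hLμ, hμ0.le]
  have h5 : f u + g u + ‖w - u‖ ^ 2 / (2 * μ) ≤ f w + g w + ‖w - v‖ ^ 2 / (2 * μ) := by
    linarith
  have h6 := mul_le_mul_of_nonneg_left h5 (by positivity : (0:ℝ) ≤ 2 * μ)
  have e1 : 2 * μ * (‖w - u‖ ^ 2 / (2 * μ)) = ‖w - u‖ ^ 2 := by field_simp
  have e2 : 2 * μ * (‖w - v‖ ^ 2 / (2 * μ)) = ‖w - v‖ ^ 2 := by field_simp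
  nlinarith [h6]

end aux

/-- Convergence rate of the alternating linearization method (ALM) when both `f` and `g`
are smooth with Lipschitz gradients and `μ ≤ min{1/L(f), 1/L(g)}`. -/
theorem alm_rate {n : ℕ}
    (f g : EuclideanSpace ℝ (Fin n) → ℝ)
    (f' g' : EuclideanSpace ℝ (Fin n) → EuclideanSpace ℝ (Fin n))
    (hf : ConvexOn ℝ Set.univ f) (hg : ConvexOn ℝ Set.univ g)
    (hf' : ∀ x, HasGradientAt f (f' x) x) (hg' : ∀ x, HasGradientAt g (g' x) x)
    (Lf Lg μ : ℝ) (hLf : 0 < Lf) (hLg : 0 < Lg)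
    (hlipf : ∀ a b, ‖f' a - f' b‖ ≤ Lf * ‖a - b‖)
    (hlipg : ∀ a b, ‖g' a - g' b‖ ≤ Lg * ‖a - b‖)
    (hμ0 : 0 < μ) (hμ : μ ≤ min (1 / Lf) (1 / Lg))
    (Qf Qg : EuclideanSpace ℝ (Fin n) → EuclideanSpace ℝ (Fin n) → ℝ)
    (hQf : ∀ u v, Qf u v = g u + f v + ⟪f' v, u - v⟫ + ‖u - v‖ ^ 2 / (2 * μ))
    (hQg : ∀ u v, Qg u v = f u + g v + ⟪g' v, u - v⟫ + ‖u - v‖ ^ 2 / (2 * μ))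
    (x y : ℕ → EuclideanSpace ℝ (Fin n)) (hx0 : x 0 = y 0)
    -- x^{k+1} minimizes Q_g(·, yᵏ), and y^{k+1} minimizes Q_f(·, x^{k+1})
    (hx : ∀ k w, Qg (x (k + 1)) (y k) ≤ Qg w (y k))
    (hy : ∀ k w, Qf (y (k + 1)) (x (k + 1)) ≤ Qf w (x (k + 1)))
    (xstar : EuclideanSpace ℝ (Fin n)) (hstar : ∀ z, f xstar + g xstar ≤ f z + g z) :
    ∀ k : ℕ, 1 ≤ k →
      f (y k) + g (y k) - (f xstar + g xstar) ≤ ‖x 0 - xstar‖ ^ 2 / (4 * μ * (k : ℝ)) := by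
  have hμg : μ ≤ 1 / Lg := le_trans hμ (min_le_right _ _)
  have hμf : μ ≤ 1 / Lf := le_trans hμ (min_le_left _ _)
  have A : ∀ k w, 2 * μ * (f (x (k+1)) + g (x (k+1))) + ‖w - x (k+1)‖ ^ 2 ≤
      2 * μ * (f w + g w) + ‖w - y k‖ ^ 2 := by
    intro k w
    apply keyStep f g g' hf hg hg' Lg μ hLg hlipg hμ0 hμg
    intro w'
    have := hx k w'
    rw [hQg, hQg] at this
    linarith
  have B : ∀ k w, 2 * μ * (g (y (k+1)) + f (y (k+1))) + ‖w - y (k+1)‖ ^ 2 ≤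
      2 * μ * (g w + f w) + ‖w - x (k+1)‖ ^ 2 := by
    intro k w
    apply keyStep g f f' hg hf hf' Lf μ hLf hlipf hμ0 hμf
    intro w'
    have := hy k w'
    rw [hQf, hQf] at this
    linarith
  -- scaled monotonicity
  have m1 : ∀ k, 2 * μ * (f (y (k+1)) + g (y (k+1))) ≤
      2 * μ * (f (x (k+1)) + g (x (k+1))) := by
    intro k
    have hb := B k (x (k+1))
    simp only [sub_self, norm_zero] at hb
    nlinarith [sq_nonneg ‖x (k+1) - y (k+1)‖]
  have m2 : ∀ k, 2 * μ * (f (x (k+1)) + g (x (k+1))) ≤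
      2 * μ * (f (y k) + g (y k)) := by
    intro k
    have ha := A k (y k)
    simp only [sub_self, norm_zero] at ha
    nlinarith [sq_nonneg ‖y k - x (k+1)‖]
  have mono : ∀ j k : ℕ, j ≤ k →
      2 * μ * (f (y k) + g (y k)) ≤ 2 * μ * (f (y j) + g (y j)) := by
    intro j k hjk
    induction k, hjk using Nat.le_induction with
    | base => exact le_refl _
    | succ k hjk ih =>
      have := m1 k
      have := m2 k
      linarith
  -- telescoping sum
  have P : ∀ K : ℕ,
      (∑ j ∈ Finset.range K, 4 * μ * (f (y (j+1)) + g (y (j+1)) - (f xstar + g xstar)))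
        + ‖xstar - y K‖ ^ 2 ≤ ‖x 0 - xstar‖ ^ 2 := by
    intro K
    induction K with
    | zero =>
      simp only [Finset.range_zero, Finset.sum_empty, zero_add]
      rw [hx0, norm_sub_rev]
    | succ K ih =>
      rw [Finset.sum_range_succ]
      have hA := A K xstar
      have hB := B K xstar
      have hm := m1 K
      linarith
  intro k hk
  have hkR : (1:ℝ) ≤ (k:ℝ) := by exact_mod_cast hk
  have hsum : (k:ℝ) * (4 * μ * (f (y k) + g (y k) - (f xstar + g xstar))) ≤
      ∑ j ∈ Finset.range k, 4 * μ * (f (y (j+1)) + g (y (j+1)) - (f xstar + g xstar)) := by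
    have := Finset.card_nsmul_le_sum (Finset.range k)
      (fun j => 4 * μ * (f (y (j+1)) + g (y (j+1)) - (f xstar + g xstar)))
      (4 * μ * (f (y k) + g (y k) - (f xstar + g xstar)))
      (by
        intro j hj
        rw [Finset.mem_range] at hj
        have h := mono (j+1) k hj
        linarith)
    simpa [Finset.card_range, nsmul_eq_mul] using this
  have hP := P k
  have hsq : (0:ℝ) ≤ ‖xstar - y k‖ ^ 2 := sq_nonneg _
  rw [le_div_iff₀ (by positivity : (0:ℝ) < 4 * μ * (k:ℝ))]
  nlinarith [hsum, hP, hsq]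
end

section
/- Suppose f, g : ℝⁿ → ℝ are convex and differentiable, and the initial multiplier is set to λ⁰ = −∇g(y⁰). Then the symmetric alternating direction augmented Lagrangian method (SADAL) — which iterates x^{k+1} = argmin_x L_μ(x,y^k;λ^k), λ^{k+1/2} = λ^k − (x^{k+1}−y^k)/μ, y^{k+1} = argmin_y L_μ(x^{k+1},y;λ^{k+1/2}), λ^{k+1} = λ^{k+1/2} − (x^{k+1}−y^{k+1})/μ — produces exactly the same iterates (x^k, y^k) as the alternating linearization method which iterates x^{k+1} = argmin_x Q_g(x,y^k) and y^{k+1} = argmin_y Q_f(y,x^{k+1}). In particular, at every iteration λ^{k+1/2} = ∇f(x^{k+1}) and λ^{k+1} = −∇g(y^{k+1}). -/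
open scoped RealInnerProductSpace

lemma sadal_key {E : Type*} [NormedAddCommGroup E] [InnerProductSpace ℝ E] [CompleteSpace E]
    (F : E → ℝ) (Fx : E) (a b : E) (μ : ℝ) (hμ : 0 < μ) (x : E)
    (hF : HasGradientAt F Fx x)
    (hmin : ∀ w, F x + ⟪a, x - b⟫ + ‖x - b‖ ^ 2 / (2 * μ)
      ≤ F w + ⟪a, w - b⟫ + ‖w - b‖ ^ 2 / (2 * μ)) :
    Fx + a + μ⁻¹ • (x - b) = 0 := by
  set φ : E → ℝ := fun w => F w + ⟪a, w - b⟫ + ‖w - b‖ ^ 2 / (2 * μ) with hφ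
  have h1 : HasFDerivAt F (InnerProductSpace.toDual ℝ E Fx) x := hF
  have hid : HasFDerivAt (fun w : E => w - b) (ContinuousLinearMap.id ℝ E) x := by
    simpa using (hasFDerivAt_id x).sub_const b
  have h2 : HasFDerivAt (fun w : E => ⟪a, w - b⟫) (innerSL ℝ a) x := by
    have := (innerSL ℝ a).hasFDerivAt.comp x hid
    simpa [Function.comp_def] using this
  have h3 : HasFDerivAt (fun w : E => ‖w - b‖ ^ 2 / (2 * μ))
      ((2 * μ)⁻¹ • ((2 : ℕ) • (innerSL ℝ (x - b)).comp (ContinuousLinearMap.id ℝ E))) x := by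
    have := (hid.norm_sq).const_smul ((2 * μ)⁻¹)
    simpa [div_eq_inv_mul, Pi.smul_def] using this
  have hD : HasFDerivAt φ (InnerProductSpace.toDual ℝ E (Fx + a + μ⁻¹ • (x - b))) x := by
    have : HasFDerivAt φ _ x := (h1.add h2).add h3
    convert this using 1
    rfl
    ext w
    simp only [InnerProductSpace.toDual_apply_apply, ContinuousLinearMap.add_apply,
      ContinuousLinearMap.smul_apply, ContinuousLinearMap.coe_smul',
      ContinuousLinearMap.comp_apply, ContinuousLinearMap.id_apply, innerSL_apply_apply,
      inner_add_left, inner_smul_left, RCLike.conj_to_real, Pi.smul_apply, smul_eq_mul,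
      nsmul_eq_mul, Nat.cast_ofNat]
    field_simp
  have hloc : IsLocalMin φ x := Filter.Eventually.of_forall hmin
  have hz := hloc.hasFDerivAt_eq_zero hD
  apply (InnerProductSpace.toDual ℝ E).injective
  simpa using hz

/-- Equivalence of SADAL and ALM when `f` and `g` are differentiable and `λ⁰ = −∇g(y⁰)`:
the SADAL iterates satisfy the ALM optimality characterizations, and the multipliers
satisfy `λ^{k+1/2} = ∇f(x^{k+1})`, `λ^{k+1} = −∇g(y^{k+1})`. -/
theorem sadal_eq_alm {n : ℕ}
    (f g : EuclideanSpace ℝ (Fin n) → ℝ)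
    (f' g' : EuclideanSpace ℝ (Fin n) → EuclideanSpace ℝ (Fin n))
    (hf : ConvexOn ℝ Set.univ f) (hg : ConvexOn ℝ Set.univ g)
    (hf' : ∀ x, HasGradientAt f (f' x) x) (hg' : ∀ x, HasGradientAt g (g' x) x)
    (μ : ℝ) (hμ : 0 < μ)
    (Lmu : EuclideanSpace ℝ (Fin n) → EuclideanSpace ℝ (Fin n) → EuclideanSpace ℝ (Fin n) → ℝ)
    (hLmu : ∀ x y lam, Lmu x y lam =
      f x + g y - ⟪lam, x - y⟫ + ‖x - y‖ ^ 2 / (2 * μ))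
    (Qf Qg : EuclideanSpace ℝ (Fin n) → EuclideanSpace ℝ (Fin n) → ℝ)
    (hQf : ∀ u v, Qf u v = g u + f v + ⟪f' v, u - v⟫ + ‖u - v‖ ^ 2 / (2 * μ))
    (hQg : ∀ u v, Qg u v = f u + g v + ⟪g' v, u - v⟫ + ‖u - v‖ ^ 2 / (2 * μ))
    -- SADAL iterates
    (x y lam lamHalf : ℕ → EuclideanSpace ℝ (Fin n))
    (hlam0 : lam 0 = -g' (y 0))
    (hx : ∀ k w, Lmu (x (k + 1)) (y k) (lam k) ≤ Lmu w (y k) (lam k))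
    (hlamHalf : ∀ k, lamHalf k = lam k - μ⁻¹ • (x (k + 1) - y k))
    (hy : ∀ k w, Lmu (x (k + 1)) (y (k + 1)) (lamHalf k) ≤ Lmu (x (k + 1)) w (lamHalf k))
    (hlam : ∀ k, lam (k + 1) = lamHalf k - μ⁻¹ • (x (k + 1) - y (k + 1))) :
    ∀ k : ℕ,
      lamHalf k = f' (x (k + 1)) ∧
      lam (k + 1) = -g' (y (k + 1)) ∧
      (∀ w, Qg (x (k + 1)) (y k) ≤ Qg w (y k)) ∧
      (∀ w, Qf (y (k + 1)) (x (k + 1)) ≤ Qf w (x (k + 1))) := by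
  have step : ∀ k, lamHalf k = f' (x (k + 1)) ∧ lam (k + 1) = -g' (y (k + 1)) := by
    intro k
    -- first-order condition for the x-update
    have hmin1 : ∀ w, f (x (k+1)) + ⟪-lam k, x (k+1) - y k⟫ + ‖x (k+1) - y k‖ ^ 2 / (2*μ)
        ≤ f w + ⟪-lam k, w - y k⟫ + ‖w - y k‖ ^ 2 / (2*μ) := by
      intro w
      have h := hx k w
      rw [hLmu, hLmu] at h
      simp only [inner_neg_left]
      linarith
    have h1 := sadal_key f (f' (x (k+1))) (-lam k) (y k) μ hμ (x (k+1)) (hf' (x (k+1))) hmin1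
    have hhalf : lamHalf k = f' (x (k+1)) := by
      rw [hlamHalf k]
      have h0 : lam k - μ⁻¹ • (x (k+1) - y k) - f' (x (k+1)) = 0 := by
        rw [← neg_eq_zero, ← h1]; abel
      exact sub_eq_zero.mp h0
    -- first-order condition for the y-update
    have hmin2 : ∀ w, g (y (k+1)) + ⟪lamHalf k, y (k+1) - x (k+1)⟫
          + ‖y (k+1) - x (k+1)‖ ^ 2 / (2*μ)
        ≤ g w + ⟪lamHalf k, w - x (k+1)⟫ + ‖w - x (k+1)‖ ^ 2 / (2*μ) := by
      intro w
      have h := hy k w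
      rw [hLmu, hLmu] at h
      have e1 : ∀ v : EuclideanSpace ℝ (Fin n),
          ⟪lamHalf k, v - x (k+1)⟫ = -⟪lamHalf k, x (k+1) - v⟫ := fun v => by
        rw [← inner_neg_right, neg_sub]
      have e2 : ∀ v : EuclideanSpace ℝ (Fin n),
          ‖v - x (k+1)‖ = ‖x (k+1) - v‖ := fun v => norm_sub_rev _ _
      rw [e1, e1, e2, e2]
      linarith
    have h2 := sadal_key g (g' (y (k+1))) (lamHalf k) (x (k+1)) μ hμ (y (k+1))
      (hg' (y (k+1))) hmin2
    refine ⟨hhalf, ?_⟩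
    rw [hlam k, ← neg_sub (y (k+1)) (x (k+1)), smul_neg, sub_neg_eq_add,
      eq_neg_iff_add_eq_zero]
    rw [← h2]; abel
  intro k
  have hlamk : lam k = -g' (y k) := by
    cases k with
    | zero => exact hlam0
    | succ m => exact (step m).2
  refine ⟨(step k).1, (step k).2, ?_, ?_⟩
  · intro w
    have h := hx k w
    rw [hLmu, hLmu, hlamk] at h
    simp only [inner_neg_left, sub_neg_eq_add] at h
    rw [hQg, hQg]
    linarith
  · intro w
    have h := hy k w
    rw [hLmu, hLmu, (step k).1] at h
    rw [hQf, hQf]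
    have e1 : ∀ v : EuclideanSpace ℝ (Fin n),
        ⟪f' (x (k+1)), v - x (k+1)⟫ = -⟪f' (x (k+1)), x (k+1) - v⟫ := fun v => by
      rw [← inner_neg_right, neg_sub]
    have e2 : ∀ v : EuclideanSpace ℝ (Fin n),
        ‖v - x (k+1)‖ = ‖x (k+1) - v‖ := fun v => norm_sub_rev _ _
    rw [e1, e1, e2, e2]
    linarith
end

section
/- Let t_1 = 1 and suppose a sequence (t_k) of positive reals satisfies, for each k ≥ 2, one of the update rules: t_k ≥ 1/2 + √2·t_{k−1} (skipping step following a regular step), t_k ≥ 1/2 + (1/√2)·t_{k−1} (regular step following a skipping step), or t_k ≥ 1/2 + t_{k−1} (two consecutive steps of the same type). Label each step k ≥ 1 either 'skipping' or 'regular', with step 1 skipping, and let r(k) be the number of regular steps among the first k steps. Then with α = √2 − 1: t_k ≥ (1/2)(k + 1 + α·r(k)) whenever step k is a skipping step, and t_k ≥ (1/(2√2))(k + 1 + α·r(k)) whenever step k is a regular step. -/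
/-- FALM-S scalar sequence lemma, case where the first step is a skipping step.
`skip k = true` means step `k` is a skipping step; `r k` counts regular steps among the first `k`. -/
theorem falms_t_bound_first_skip (t : ℕ → ℝ) (skip : ℕ → Bool)
    (ht1 : t 1 = 1) (hs1 : skip 1 = true)
    (hpos : ∀ k : ℕ, 1 ≤ k → 0 < t k)
    (hrec : ∀ k : ℕ, 2 ≤ k →
      (skip k = true → skip (k - 1) = false → 1 / 2 + Real.sqrt 2 * t (k - 1) ≤ t k) ∧
      (skip k = false → skip (k - 1) = true → 1 / 2 + (1 / Real.sqrt 2) * t (k - 1) ≤ t k) ∧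
      (skip k = skip (k - 1) → 1 / 2 + t (k - 1) ≤ t k)) :
    ∀ k : ℕ, 1 ≤ k →
      (skip k = true →
        (1 / 2) * ((k : ℝ) + 1 + (Real.sqrt 2 - 1) *
          (((Finset.Icc 1 k).filter fun i => skip i = false).card : ℝ)) ≤ t k) ∧
      (skip k = false →
        (1 / (2 * Real.sqrt 2)) * ((k : ℝ) + 1 + (Real.sqrt 2 - 1) *
          (((Finset.Icc 1 k).filter fun i => skip i = false).card : ℝ)) ≤ t k) := by
  have hs0 : (0:ℝ) < Real.sqrt 2 := by positivity
  have hss : Real.sqrt 2 * Real.sqrt 2 = 2 := Real.mul_self_sqrt (by norm_num)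
  have e1 : 1 / Real.sqrt 2 = Real.sqrt 2 / 2 := by
    rw [div_eq_div_iff hs0.ne' (by norm_num : (2:ℝ) ≠ 0)]; linarith [hss]
  have e2 : 1 / (2 * Real.sqrt 2) = Real.sqrt 2 / 4 := by
    rw [div_eq_div_iff (by positivity) (by norm_num : (4:ℝ) ≠ 0)]; nlinarith [hss]
  intro k hk
  induction k, hk using Nat.le_induction with
  | base =>
    refine ⟨fun _ => ?_, fun h => by rw [hs1] at h; simp at h⟩
    have he : ((Finset.Icc 1 1).filter fun i => skip i = false) = ∅ := by
      simp [Finset.Icc_self, Finset.filter_singleton, hs1]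
    rw [he, ht1]
    norm_num
  | succ n hn ih =>
    have hrec' := hrec (n+1) (by omega)
    simp only [Nat.add_sub_cancel] at hrec'
    set R : ℕ := ((Finset.Icc 1 n).filter fun i => skip i = false).card with hR
    have hssR : Real.sqrt 2 * Real.sqrt 2 * (R:ℝ) = 2 * (R:ℝ) := by rw [hss]
    have hicc : Finset.Icc 1 (n+1) = insert (n+1) (Finset.Icc 1 n) := by
      exact (Finset.insert_Icc_right_eq_Icc_add_one (by omega)).symm
    have hnot : (n+1) ∉ Finset.Icc 1 n := by simp
    cases hsk : skip (n+1) with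
    | true =>
      refine ⟨fun _ => ?_, fun h => by simp at h⟩
      have hcard : (((Finset.Icc 1 (n+1)).filter fun i => skip i = false).card : ℝ) = R := by
        rw [hicc, Finset.filter_insert, if_neg (by simp [hsk]), hR]
      rw [hcard]
      push_cast
      cases hskn : skip n with
      | true =>
        have h1 := hrec'.2.2 (by rw [hsk, hskn])
        have h2 := ih.1 hskn
        linarith
      | false =>
        have h1 := hrec'.1 hsk hskn
        have h2 := ih.2 hskn
        rw [e2] at h2
        have h2s := mul_le_mul_of_nonneg_left h2 hs0.le
        nlinarith [h2s, hss, hssR]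
    | false =>
      refine ⟨fun h => by simp at h, fun _ => ?_⟩
      have hcard : (((Finset.Icc 1 (n+1)).filter fun i => skip i = false).card : ℝ) = R + 1 := by
        rw [hicc, Finset.filter_insert, if_pos hsk,
          Finset.card_insert_of_notMem (fun hc => hnot (Finset.mem_of_mem_filter _ hc))]
        push_cast [hR]
        ring
      rw [hcard, e2]
      push_cast
      cases hskn : skip n with
      | true =>
        have h1 := hrec'.2.1 hsk hskn
        have h2 := ih.1 hskn
        rw [e1] at h1
        have h2s := mul_le_mul_of_nonneg_left h2 hs0.le
        nlinarith [h1, h2s, hss, hssR]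
      | false =>
        have h1 := hrec'.2.2 (by rw [hsk, hskn])
        have h2 := ih.2 hskn
        rw [e2] at h2
        nlinarith [h1, h2, hss, hssR, hs0]
end

section
/- Let t_1 = 1 and suppose a sequence (t_k) of positive reals satisfies, for each k ≥ 2, one of the update rules: t_k ≥ 1/2 + √2·t_{k−1} if step k is skipping and k−1 is regular; t_k ≥ 1/2 + (1/√2)·t_{k−1} if step k is regular and step k−1 is skipping; t_k ≥ 1/2 + t_{k−1} otherwise. Assume step 1 is a regular step and let s(k) be the number of skipping steps among the first k steps. Then with α̂ = 1/√2 − 1: t_k ≥ (1/√2)(k + 1 + α̂·s(k)) whenever step k is a skipping step, and t_k ≥ (1/2)(k + 1 + α̂·s(k)) whenever step k is a regular step. -/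
/-- FALM-S scalar sequence lemma, case where the first step is a regular step.
`skip k = true` means step `k` is a skipping step; `s k` counts skipping steps among the
first `k`; `α̂ = 1/√2 − 1`. -/
theorem falms_t_bound_first_regular (t : ℕ → ℝ) (skip : ℕ → Bool)
    (ht1 : t 1 = 1) (hs1 : skip 1 = false)
    (hpos : ∀ k : ℕ, 1 ≤ k → 0 < t k)
    (hrec : ∀ k : ℕ, 2 ≤ k →
      (skip k = true → skip (k - 1) = false → 1 / 2 + Real.sqrt 2 * t (k - 1) ≤ t k) ∧
      (skip k = false → skip (k - 1) = true → 1 / 2 + (1 / Real.sqrt 2) * t (k - 1) ≤ t k) ∧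
      (skip k = skip (k - 1) → 1 / 2 + t (k - 1) ≤ t k)) :
    ∀ k : ℕ, 1 ≤ k →
      (skip k = true →
        (1 / Real.sqrt 2) * ((k : ℝ) + 1 + (1 / Real.sqrt 2 - 1) *
          (((Finset.Icc 1 k).filter fun i => skip i = true).card : ℝ)) ≤ t k) ∧
      (skip k = false →
        (1 / 2) * ((k : ℝ) + 1 + (1 / Real.sqrt 2 - 1) *
          (((Finset.Icc 1 k).filter fun i => skip i = true).card : ℝ)) ≤ t k) := by
  have hrpos : (0:ℝ) < Real.sqrt 2 := Real.sqrt_pos.mpr (by norm_num)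
  have hr2 : Real.sqrt 2 * Real.sqrt 2 = 2 := Real.mul_self_sqrt (by norm_num)
  have hinv : (1:ℝ) / Real.sqrt 2 = Real.sqrt 2 / 2 := by
    rw [div_eq_div_iff hrpos.ne' (by norm_num : (2:ℝ) ≠ 0), one_mul, hr2]
  intro k hk
  induction k, hk using Nat.le_induction with
  | base =>
    constructor
    · intro h; rw [hs1] at h; exact absurd h (by simp)
    · intro _
      have he : (Finset.Icc 1 1).filter (fun i => skip i = true) = ∅ := by
        simp [Finset.Icc_self, Finset.filter_singleton, hs1]
      rw [he]; simp [ht1]; norm_num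
  | succ n hn IH =>
    have hcard : (((Finset.Icc 1 (n+1)).filter fun i => skip i = true).card : ℝ)
        = (((Finset.Icc 1 n).filter fun i => skip i = true).card : ℝ)
          + (if skip (n+1) = true then 1 else 0) := by
      have hins : Finset.Icc 1 (n+1) = insert (n+1) (Finset.Icc 1 n) := by
        rw [← Finset.insert_Icc_right_eq_Icc_add_one (by omega)]
      rw [hins, Finset.filter_insert]
      by_cases h : skip (n+1) = true
      · rw [if_pos h, if_pos h, Finset.card_insert_of_notMem (by simp)]
        push_cast; ring
      · rw [if_neg h, if_neg h]; ring
    obtain ⟨h1, h2, h3⟩ := hrec (n+1) (by omega)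
    simp only [Nat.add_sub_cancel] at h1 h2 h3
    obtain ⟨IHs, IHr⟩ := IH
    set S : ℝ := (((Finset.Icc 1 n).filter fun i => skip i = true).card : ℝ) with hS
    constructor
    · intro hk1
      rw [hcard, if_pos hk1]
      cases hn' : skip n with
      | false =>
        have hb := h1 hk1 hn'
        have hIH := IHr hn'
        rw [hinv] at hIH ⊢
        have := mul_le_mul_of_nonneg_left hIH hrpos.le
        push_cast
        nlinarith [hr2, hrpos]
      | true =>
        have hb := h3 (by rw [hk1, hn'])
        have hIH := IHs hn'
        rw [hinv] at hIH ⊢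
        push_cast
        nlinarith [hr2, hrpos]
    · intro hk1
      rw [hcard, if_neg (by simp [hk1])]
      cases hn' : skip n with
      | true =>
        have hb := h2 hk1 hn'
        have hIH := IHs hn'
        rw [hinv] at hIH hb ⊢
        have hmul := mul_le_mul_of_nonneg_left hIH (by positivity : (0:ℝ) ≤ Real.sqrt 2 / 2)
        have hsq : Real.sqrt 2 / 2 * (Real.sqrt 2 / 2) = 1 / 2 := by
          nlinarith [hr2]
        rw [← mul_assoc, hsq] at hmul
        push_cast
        linarith [hmul, hb]
      | false =>
        have hb := h3 (by rw [hk1, hn'])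
        have hIH := IHr hn'
        rw [hinv] at hIH ⊢
        push_cast
        nlinarith [hr2, hrpos]
end

section
/- Let f(X) = ‖X‖_* (nuclear norm on m×n real matrices) and g(Y) = ρ‖Y‖₁ (entrywise ℓ₁ norm), with Nesterov smoothings f_σ(X) = max{⟨X,W⟩ − (σ/2)‖W‖_F² : ‖W‖ ≤ 1} and g_σ(Y) = max{⟨Y,Z⟩ − (σ/2)‖Z‖_F² : ‖Z‖_∞ ≤ ρ}. Fix ε > 0 and σ = ε/(2·max{min(m,n), mnρ²}). If (X(σ), Y(σ)) is feasible (X(σ)+Y(σ) = M) and satisfies f_σ(X(σ)) + g_σ(Y(σ)) ≤ min{f_σ(X)+g_σ(Y) : X+Y=M} + ε/2, then f(X(σ)) + g(Y(σ)) ≤ min{f(X)+g(Y) : X+Y=M} + ε. -/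
open Matrix
/-- The nuclear norm of a real matrix: the sum of its singular values. -/
noncomputable def nuclearNorm {m n : ℕ} (X : Matrix (Fin m) (Fin n) ℝ) : ℝ :=
  ∑ j, Real.sqrt ((Matrix.isHermitian_conjTranspose_mul_self X).eigenvalues j)

/-- The spectral (operator) norm: the largest singular value. -/
noncomputable def specNorm {m n : ℕ} (W : Matrix (Fin m) (Fin n) ℝ) : ℝ :=
  ⨆ j, Real.sqrt ((Matrix.isHermitian_conjTranspose_mul_self W).eigenvalues j)

/-- The trace (Frobenius) inner product `⟨A,B⟩ = trace(AᵀB)`. -/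
noncomputable def frobInner {m n : ℕ} (A B : Matrix (Fin m) (Fin n) ℝ) : ℝ :=
  (Aᵀ * B).trace

/-- The squared Frobenius norm. -/
noncomputable def frobNormSq {m n : ℕ} (A : Matrix (Fin m) (Fin n) ℝ) : ℝ :=
  frobInner A A

/-- The entrywise ℓ₁ norm of a matrix. -/
noncomputable def l1Norm {m n : ℕ} (Y : Matrix (Fin m) (Fin n) ℝ) : ℝ :=
  ∑ i, ∑ j, |Y i j|

namespace RPCAAux

variable {m n : ℕ}

lemma dot_self_nonneg {k : ℕ} (v : Fin k → ℝ) : 0 ≤ v ⬝ᵥ v :=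
  Finset.sum_nonneg fun _ _ => mul_self_nonneg _

lemma frobInner_eq_sum (A B : Matrix (Fin m) (Fin n) ℝ) :
    frobInner A B = ∑ i, ∑ j, A i j * B i j := by
  simp only [frobInner, Matrix.trace, Matrix.diag, Matrix.mul_apply, Matrix.transpose_apply]
  rw [Finset.sum_comm]

lemma frobNormSq_eq_sum (A : Matrix (Fin m) (Fin n) ℝ) :
    frobNormSq A = ∑ i, ∑ j, (A i j) ^ 2 := by
  rw [frobNormSq, frobInner_eq_sum]
  simp [sq]

lemma frobNormSq_nonneg (A : Matrix (Fin m) (Fin n) ℝ) : 0 ≤ frobNormSq A := by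
  rw [frobNormSq_eq_sum]
  exact Finset.sum_nonneg fun _ _ => Finset.sum_nonneg fun _ _ => sq_nonneg _

lemma nuclearNorm_nonneg (X : Matrix (Fin m) (Fin n) ℝ) : 0 ≤ nuclearNorm X :=
  Finset.sum_nonneg fun _ _ => Real.sqrt_nonneg _

lemma star_mulVec_dot (U : Matrix.unitaryGroup (Fin n) ℝ) (v : Fin n → ℝ) :
    (star (U : Matrix (Fin n) (Fin n) ℝ) *ᵥ v) ⬝ᵥ (star (U : Matrix (Fin n) (Fin n) ℝ) *ᵥ v)
      = v ⬝ᵥ v := by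
  have h1 : (U : Matrix (Fin n) (Fin n) ℝ) * star (U : Matrix (Fin n) (Fin n) ℝ) = 1 :=
    (Matrix.mem_unitaryGroup_iff).mp U.2
  have hs : star (U : Matrix (Fin n) (Fin n) ℝ) *ᵥ v = v ᵥ* (U : Matrix (Fin n) (Fin n) ℝ) := by
    rw [Matrix.star_eq_conjTranspose, Matrix.conjTranspose_eq_transpose_of_trivial,
      Matrix.mulVec_transpose]
  calc (star (U : Matrix (Fin n) (Fin n) ℝ) *ᵥ v) ⬝ᵥ (star (U : Matrix (Fin n) (Fin n) ℝ) *ᵥ v)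
      = (v ᵥ* (U : Matrix (Fin n) (Fin n) ℝ)) ⬝ᵥ (star (U : Matrix (Fin n) (Fin n) ℝ) *ᵥ v) := by
        rw [hs]
    _ = (v ᵥ* ((U : Matrix (Fin n) (Fin n) ℝ) * star (U : Matrix (Fin n) (Fin n) ℝ))) ⬝ᵥ v := by
        rw [Matrix.dotProduct_mulVec, Matrix.vecMul_vecMul]
    _ = v ⬝ᵥ v := by rw [h1, Matrix.vecMul_one]

lemma quad_unitary_diag (U : Matrix.unitaryGroup (Fin n) ℝ) (e : Fin n → ℝ) (v : Fin n → ℝ) :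
    v ⬝ᵥ (((U : Matrix (Fin n) (Fin n) ℝ) * Matrix.diagonal e
        * star (U : Matrix (Fin n) (Fin n) ℝ)) *ᵥ v)
      = ∑ j, e j * ((star (U : Matrix (Fin n) (Fin n) ℝ) *ᵥ v) j) ^ 2 := by
  have hs : star (U : Matrix (Fin n) (Fin n) ℝ) *ᵥ v = v ᵥ* (U : Matrix (Fin n) (Fin n) ℝ) := by
    rw [Matrix.star_eq_conjTranspose, Matrix.conjTranspose_eq_transpose_of_trivial,
      Matrix.mulVec_transpose]
  set w := star (U : Matrix (Fin n) (Fin n) ℝ) *ᵥ v with hw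
  calc v ⬝ᵥ (((U : Matrix (Fin n) (Fin n) ℝ) * Matrix.diagonal e
        * star (U : Matrix (Fin n) (Fin n) ℝ)) *ᵥ v)
      = v ⬝ᵥ ((U : Matrix (Fin n) (Fin n) ℝ) *ᵥ (Matrix.diagonal e *ᵥ w)) := by
        rw [Matrix.mulVec_mulVec, Matrix.mulVec_mulVec, Matrix.mul_assoc]
    _ = (v ᵥ* (U : Matrix (Fin n) (Fin n) ℝ)) ⬝ᵥ (Matrix.diagonal e *ᵥ w) := by
        rw [Matrix.dotProduct_mulVec]
    _ = w ⬝ᵥ (Matrix.diagonal e *ᵥ w) := by rw [← hs]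
    _ = ∑ j, e j * (w j) ^ 2 := by
        simp only [dotProduct, Matrix.mulVec_diagonal]
        exact Finset.sum_congr rfl fun j _ => by ring

lemma eigenvectorBasis_dot_self {k : ℕ} {B : Matrix (Fin k) (Fin k) ℝ} (hB : B.IsHermitian)
    (j : Fin k) : ⇑(hB.eigenvectorBasis j) ⬝ᵥ ⇑(hB.eigenvectorBasis j) = 1 := by
  have h := hB.eigenvectorBasis.orthonormal.1 j
  have h2 : (inner ℝ (hB.eigenvectorBasis j) (hB.eigenvectorBasis j) : ℝ) = 1 := by
    rw [real_inner_self_eq_norm_sq, h]; norm_num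
  rw [← h2, PiLp.inner_apply]
  simp [dotProduct, sq]

lemma mulVec_eigen_dot (W : Matrix (Fin m) (Fin n) ℝ) (j : Fin n) :
    (W *ᵥ ⇑((Matrix.isHermitian_conjTranspose_mul_self W).eigenvectorBasis j)) ⬝ᵥ
      (W *ᵥ ⇑((Matrix.isHermitian_conjTranspose_mul_self W).eigenvectorBasis j))
      = (Matrix.isHermitian_conjTranspose_mul_self W).eigenvalues j := by
  set hB := Matrix.isHermitian_conjTranspose_mul_self W
  set b : Fin n → ℝ := ⇑(hB.eigenvectorBasis j) with hb
  have hv : (Wᴴ * W) *ᵥ b = hB.eigenvalues j • b := hB.mulVec_eigenvectorBasis j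
  have h1 : (W *ᵥ b) ⬝ᵥ (W *ᵥ b) = b ⬝ᵥ ((Wᴴ * W) *ᵥ b) := by
    rw [Matrix.dotProduct_mulVec, ← Matrix.mulVec_transpose, Matrix.mulVec_mulVec,
      dotProduct_comm, Matrix.conjTranspose_eq_transpose_of_trivial]
  rw [h1, hv, dotProduct_smul, smul_eq_mul, eigenvectorBasis_dot_self, mul_one]

lemma eig_le_of_quad (W : Matrix (Fin m) (Fin n) ℝ) (c : ℝ)
    (h : ∀ v : Fin n → ℝ, (W *ᵥ v) ⬝ᵥ (W *ᵥ v) ≤ c * (v ⬝ᵥ v)) (j : Fin n) :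
    (Matrix.isHermitian_conjTranspose_mul_self W).eigenvalues j ≤ c := by
  have := h ⇑((Matrix.isHermitian_conjTranspose_mul_self W).eigenvectorBasis j)
  rwa [mulVec_eigen_dot, eigenvectorBasis_dot_self, mul_one] at this

lemma specNorm_le_one_of_quad (W : Matrix (Fin m) (Fin n) ℝ)
    (h : ∀ v : Fin n → ℝ, (W *ᵥ v) ⬝ᵥ (W *ᵥ v) ≤ 1 * (v ⬝ᵥ v)) : specNorm W ≤ 1 := by
  unfold specNorm
  rcases Nat.eq_zero_or_pos n with hn | hn
  · subst hn
    simp [Real.iSup_of_isEmpty]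
  · have : Nonempty (Fin n) := ⟨⟨0, hn⟩⟩
    exact ciSup_le fun j => Real.sqrt_le_one.mpr (eig_le_of_quad W 1 h j)

lemma ofReal_comp_eq (f : Fin n → ℝ) : ((RCLike.ofReal : ℝ → ℝ) ∘ f) = f := by
  funext j; simp [RCLike.ofReal]

/-- spectral decomposition of `WᴴW` over ℝ with real diagonal -/
lemma spectral_real (W : Matrix (Fin m) (Fin n) ℝ) :
    Wᴴ * W = ((Matrix.isHermitian_conjTranspose_mul_self W).eigenvectorUnitary
        : Matrix (Fin n) (Fin n) ℝ)
      * Matrix.diagonal ((Matrix.isHermitian_conjTranspose_mul_self W).eigenvalues)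
      * star ((Matrix.isHermitian_conjTranspose_mul_self W).eigenvectorUnitary
        : Matrix (Fin n) (Fin n) ℝ) := by
  have h := (Matrix.isHermitian_conjTranspose_mul_self W).spectral_theorem
  rwa [ofReal_comp_eq] at h

lemma quad_eq_sum (W : Matrix (Fin m) (Fin n) ℝ) (v : Fin n → ℝ) :
    v ⬝ᵥ ((Wᴴ * W) *ᵥ v) = ∑ j, (Matrix.isHermitian_conjTranspose_mul_self W).eigenvalues j *
      ((star ((Matrix.isHermitian_conjTranspose_mul_self W).eigenvectorUnitary
        : Matrix (Fin n) (Fin n) ℝ) *ᵥ v) j) ^ 2 := by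
  conv_lhs => rw [spectral_real W]
  exact quad_unitary_diag _ _ v

lemma quad_le_of_specNorm_le_one (W : Matrix (Fin m) (Fin n) ℝ) (h : specNorm W ≤ 1) :
    ∀ v : Fin n → ℝ, (W *ᵥ v) ⬝ᵥ (W *ᵥ v) ≤ 1 * (v ⬝ᵥ v) := by
  set hB := Matrix.isHermitian_conjTranspose_mul_self W
  have heig : ∀ j, hB.eigenvalues j ≤ 1 := by
    intro j
    have h0 := Matrix.eigenvalues_conjTranspose_mul_self_nonneg W j
    unfold specNorm at h
    have h1 : Real.sqrt (hB.eigenvalues j) ≤ ⨆ i, Real.sqrt (hB.eigenvalues i) :=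
      le_ciSup (f := fun i => Real.sqrt (hB.eigenvalues i))
        (Set.Finite.bddAbove (Set.finite_range _)) j
    have h2 := h1.trans h
    nlinarith [Real.sq_sqrt h0, Real.sqrt_nonneg (hB.eigenvalues j)]
  intro v
  have hq : (W *ᵥ v) ⬝ᵥ (W *ᵥ v) = v ⬝ᵥ ((Wᴴ * W) *ᵥ v) := by
    rw [Matrix.dotProduct_mulVec, ← Matrix.mulVec_transpose, Matrix.mulVec_mulVec,
      dotProduct_comm, Matrix.conjTranspose_eq_transpose_of_trivial]
  set U := hB.eigenvectorUnitary
  set w := star (U : Matrix (Fin n) (Fin n) ℝ) *ᵥ v with hw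
  have hws : w ⬝ᵥ w = v ⬝ᵥ v := star_mulVec_dot U v
  have hsum : ∑ j, (w j) * (w j) = w ⬝ᵥ w := rfl
  calc (W *ᵥ v) ⬝ᵥ (W *ᵥ v) = v ⬝ᵥ ((Wᴴ * W) *ᵥ v) := hq
    _ = ∑ j, hB.eigenvalues j * (w j) ^ 2 := quad_eq_sum W v
    _ ≤ ∑ j, (w j) ^ 2 := by
        apply Finset.sum_le_sum
        intro j _
        nlinarith [sq_nonneg (w j), heig j]
    _ = w ⬝ᵥ w := by simp [dotProduct, sq]
    _ = 1 * (v ⬝ᵥ v) := by rw [hws, one_mul]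

/-- trace of a square matrix as a sum of quadratic forms over the columns of a unitary -/
lemma trace_eq_sum_quad (C : Matrix (Fin n) (Fin n) ℝ) (U : Matrix.unitaryGroup (Fin n) ℝ) :
    C.trace = ∑ j, (fun i => (U : Matrix (Fin n) (Fin n) ℝ) i j) ⬝ᵥ
      (C *ᵥ fun i => (U : Matrix (Fin n) (Fin n) ℝ) i j) := by
  have h1 : (U : Matrix (Fin n) (Fin n) ℝ) * star (U : Matrix (Fin n) (Fin n) ℝ) = 1 :=
    (Matrix.mem_unitaryGroup_iff).mp U.2
  have h2 : (star (U : Matrix (Fin n) (Fin n) ℝ) * C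
      * (U : Matrix (Fin n) (Fin n) ℝ)).trace = C.trace := by
    rw [Matrix.trace_mul_cycle, h1, Matrix.one_mul]
  rw [← h2]
  simp only [Matrix.trace, Matrix.diag, Matrix.mul_apply, Matrix.star_apply, star_trivial,
    Matrix.mulVec, dotProduct]
  refine Finset.sum_congr rfl fun j _ => ?_
  calc ∑ k, (∑ i, (U : Matrix (Fin n) (Fin n) ℝ) i j * C i k) * (U : Matrix (Fin n) (Fin n) ℝ) k j
      = ∑ k, ∑ i, (U : Matrix (Fin n) (Fin n) ℝ) i j
          * (C i k * (U : Matrix (Fin n) (Fin n) ℝ) k j) := by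
        refine Finset.sum_congr rfl fun k _ => ?_
        rw [Finset.sum_mul]
        exact Finset.sum_congr rfl fun i _ => by ring
    _ = ∑ i, ∑ k, (U : Matrix (Fin n) (Fin n) ℝ) i j
          * (C i k * (U : Matrix (Fin n) (Fin n) ℝ) k j) := Finset.sum_comm
    _ = ∑ i, (U : Matrix (Fin n) (Fin n) ℝ) i j
          * ∑ k, C i k * (U : Matrix (Fin n) (Fin n) ℝ) k j := by
        exact Finset.sum_congr rfl fun i _ => (Finset.mul_sum _ _ _).symm

lemma frobInner_le_nuclearNorm (X W : Matrix (Fin m) (Fin n) ℝ) (hW : specNorm W ≤ 1) :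
    frobInner X W ≤ nuclearNorm X := by
  set hA := Matrix.isHermitian_conjTranspose_mul_self X
  set U := hA.eigenvectorUnitary
  have hcol : ∀ j, (fun i => (U : Matrix (Fin n) (Fin n) ℝ) i j) = ⇑(hA.eigenvectorBasis j) := by
    intro j; funext i; exact hA.eigenvectorUnitary_apply i j
  have htr : frobInner X W = ∑ j, (X *ᵥ ⇑(hA.eigenvectorBasis j)) ⬝ᵥ
      (W *ᵥ ⇑(hA.eigenvectorBasis j)) := by
    rw [frobInner, trace_eq_sum_quad (Xᵀ * W) U]
    refine Finset.sum_congr rfl fun j _ => ?_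
    rw [hcol j, ← Matrix.mulVec_mulVec, Matrix.dotProduct_mulVec, ← Matrix.mulVec_transpose,
      Matrix.transpose_transpose]
  rw [htr, nuclearNorm]
  apply Finset.sum_le_sum
  intro j _
  have hcs := Real.sum_mul_le_sqrt_mul_sqrt Finset.univ
    (X *ᵥ ⇑(hA.eigenvectorBasis j)) (W *ᵥ ⇑(hA.eigenvectorBasis j))
  have hx : ∑ i, (X *ᵥ ⇑(hA.eigenvectorBasis j)) i ^ 2 = hA.eigenvalues j := by
    rw [← mulVec_eigen_dot X j]
    exact Finset.sum_congr rfl fun i _ => sq _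
  have hw1 : ∑ i, (W *ᵥ ⇑(hA.eigenvectorBasis j)) i ^ 2 ≤ 1 := by
    have := quad_le_of_specNorm_le_one W hW ⇑(hA.eigenvectorBasis j)
    rw [eigenvectorBasis_dot_self, mul_one] at this
    calc ∑ i, (W *ᵥ ⇑(hA.eigenvectorBasis j)) i ^ 2
        = (W *ᵥ ⇑(hA.eigenvectorBasis j)) ⬝ᵥ (W *ᵥ ⇑(hA.eigenvectorBasis j)) :=
          Finset.sum_congr rfl fun i _ => (sq _)
      _ ≤ 1 := this
  calc (X *ᵥ ⇑(hA.eigenvectorBasis j)) ⬝ᵥ (W *ᵥ ⇑(hA.eigenvectorBasis j))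
      ≤ Real.sqrt (∑ i, (X *ᵥ ⇑(hA.eigenvectorBasis j)) i ^ 2)
        * Real.sqrt (∑ i, (W *ᵥ ⇑(hA.eigenvectorBasis j)) i ^ 2) := hcs
    _ ≤ Real.sqrt (hA.eigenvalues j) * 1 := by
        apply mul_le_mul
        · rw [hx]
        · exact Real.sqrt_le_one.mpr hw1
        · exact Real.sqrt_nonneg _
        · exact Real.sqrt_nonneg _
    _ = Real.sqrt (hA.eigenvalues j) := mul_one _

lemma dot_mulVec_self (W : Matrix (Fin m) (Fin n) ℝ) (v : Fin n → ℝ) :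
    (W *ᵥ v) ⬝ᵥ (W *ᵥ v) = v ⬝ᵥ ((Wᴴ * W) *ᵥ v) := by
  rw [Matrix.dotProduct_mulVec, ← Matrix.mulVec_transpose, Matrix.mulVec_mulVec,
    dotProduct_comm, Matrix.conjTranspose_eq_transpose_of_trivial]

lemma exists_dual (X : Matrix (Fin m) (Fin n) ℝ) :
    ∃ W : Matrix (Fin m) (Fin n) ℝ, specNorm W ≤ 1 ∧ frobInner X W = nuclearNorm X ∧
      frobNormSq W ≤ ((min m n : ℕ) : ℝ) := by
  classical
  set hA := Matrix.isHermitian_conjTranspose_mul_self X with hAdef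
  set lam := hA.eigenvalues with hlamdef
  set V : Matrix (Fin n) (Fin n) ℝ := (hA.eigenvectorUnitary : Matrix (Fin n) (Fin n) ℝ) with hV
  have hUnit : V * star V = 1 := (Matrix.mem_unitaryGroup_iff).mp hA.eigenvectorUnitary.2
  have hUnit' : star V * V = 1 := (Matrix.mem_unitaryGroup_iff').mp hA.eigenvectorUnitary.2
  have hcancel : ∀ T : Matrix (Fin n) (Fin n) ℝ, star V * (V * T) = T := fun T => by
    rw [← Matrix.mul_assoc, hUnit', Matrix.one_mul]
  have hlam0 : ∀ j, 0 ≤ lam j := fun j => Matrix.eigenvalues_conjTranspose_mul_self_nonneg X j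
  set d : Fin n → ℝ := fun j => if lam j = 0 then 0 else (Real.sqrt (lam j))⁻¹ with hd
  set e : Fin n → ℝ := fun j => if lam j = 0 then 0 else 1 with he
  set S : Matrix (Fin n) (Fin n) ℝ := V * Matrix.diagonal d * star V with hS
  set W : Matrix (Fin m) (Fin n) ℝ := X * S with hWdef
  have hA2 : Xᴴ * X = V * Matrix.diagonal lam * star V := spectral_real X
  have hAmul : ∀ T : Matrix (Fin n) (Fin n) ℝ,
      Xᴴ * (X * T) = V * (Matrix.diagonal lam * (star V * T)) := by
    intro T
    rw [← Matrix.mul_assoc, hA2]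
    simp only [Matrix.mul_assoc]
  have hDstar : star (Matrix.diagonal d) = Matrix.diagonal d := by
    simp [Matrix.star_eq_conjTranspose, Matrix.diagonal_conjTranspose]
  have hstarS : star S = S := by
    rw [hS, Matrix.star_mul, Matrix.star_mul, star_star, hDstar, ← Matrix.mul_assoc]
  have hdmul : (fun j => d j * lam j * d j) = e := by
    funext j
    by_cases hj : lam j = 0
    · simp [hd, he, hj]
    · have hpos : 0 < lam j := lt_of_le_of_ne (hlam0 j) (Ne.symm hj)
      have hsq : Real.sqrt (lam j) * Real.sqrt (lam j) = lam j := Real.mul_self_sqrt (hlam0 j)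
      have hsne : Real.sqrt (lam j) ≠ 0 := ne_of_gt (Real.sqrt_pos.mpr hpos)
      simp only [hd, he, if_neg hj]
      field_simp
      rw [Real.sq_sqrt (hlam0 j)]
  have hDLD : Matrix.diagonal d * (Matrix.diagonal lam * (Matrix.diagonal d * star V))
      = Matrix.diagonal e * star V := by
    rw [← Matrix.mul_assoc, ← Matrix.mul_assoc, Matrix.diagonal_mul_diagonal,
      Matrix.diagonal_mul_diagonal, hdmul]
  have hWW : Wᴴ * W = V * Matrix.diagonal e * star V := by
    rw [hWdef, Matrix.conjTranspose_mul, ← Matrix.star_eq_conjTranspose S, hstarS]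
    calc S * Xᴴ * (X * S)
        = S * (Xᴴ * (X * S)) := by rw [Matrix.mul_assoc]
      _ = S * (V * (Matrix.diagonal lam * (star V * S))) := by rw [hAmul]
      _ = V * (Matrix.diagonal d * (Matrix.diagonal lam * (Matrix.diagonal d * star V))) := by
          rw [hS]
          simp only [Matrix.mul_assoc, hcancel]
      _ = V * (Matrix.diagonal e * star V) := by rw [hDLD]
      _ = V * Matrix.diagonal e * star V := by rw [Matrix.mul_assoc]
  have hspec : specNorm W ≤ 1 := by
    apply specNorm_le_one_of_quad
    intro v
    rw [dot_mulVec_self, hWW]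
    have := quad_unitary_diag hA.eigenvectorUnitary e v
    rw [← hV] at this
    rw [this]
    set w := star V *ᵥ v with hw
    have hws : w ⬝ᵥ w = v ⬝ᵥ v := by
      have := star_mulVec_dot hA.eigenvectorUnitary v
      rwa [← hV] at this
    calc ∑ j, e j * (w j) ^ 2 ≤ ∑ j, (w j) ^ 2 := by
          apply Finset.sum_le_sum
          intro j _
          have : e j ≤ 1 := by by_cases hj : lam j = 0 <;> simp [he, hj]
          nlinarith [sq_nonneg (w j)]
      _ = w ⬝ᵥ w := by simp [dotProduct, sq]
      _ = 1 * (v ⬝ᵥ v) := by rw [hws, one_mul]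
  have hlamd : ∀ j, lam j * d j = Real.sqrt (lam j) := by
    intro j
    by_cases hj : lam j = 0
    · simp [hd, hj]
    · have hpos : 0 < lam j := lt_of_le_of_ne (hlam0 j) (Ne.symm hj)
      have hsq : Real.sqrt (lam j) * Real.sqrt (lam j) = lam j := Real.mul_self_sqrt (hlam0 j)
      have hsne : Real.sqrt (lam j) ≠ 0 := ne_of_gt (Real.sqrt_pos.mpr hpos)
      simp only [hd, if_neg hj]
      field_simp
      rw [Real.sq_sqrt (hlam0 j)]
  have hinner : frobInner X W = nuclearNorm X := by
    rw [frobInner, ← Matrix.conjTranspose_eq_transpose_of_trivial, hWdef, hAmul S]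
    have hSV : star V * S = Matrix.diagonal d * star V := by
      rw [hS]
      simp only [Matrix.mul_assoc, hcancel]
    rw [hSV, Matrix.trace_mul_comm]
    simp only [Matrix.mul_assoc]
    rw [hUnit', Matrix.mul_one, Matrix.diagonal_mul_diagonal, Matrix.trace_diagonal, nuclearNorm]
    refine Finset.sum_congr rfl fun j _ => ?_
    show lam j * d j = _
    rw [hlamd j]
  have hfns : frobNormSq W ≤ ((min m n : ℕ) : ℝ) := by
    have htr : frobNormSq W = ∑ j, e j := by
      rw [frobNormSq, frobInner, ← Matrix.conjTranspose_eq_transpose_of_trivial, hWW,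
        Matrix.trace_mul_cycle, hUnit', Matrix.one_mul, Matrix.trace_diagonal]
    have hcard : ∑ j, e j = (((Finset.univ.filter fun j => lam j ≠ 0).card : ℕ) : ℝ) := by
      calc ∑ j, e j = ∑ j, if lam j ≠ 0 then (1:ℝ) else 0 := by
            refine Finset.sum_congr rfl fun j _ => ?_
            simp only [he, ne_eq, ite_not]
        _ = (((Finset.univ.filter fun j => lam j ≠ 0).card : ℕ) : ℝ) := by
            rw [Finset.sum_boole]
    have h1 : (Xᴴ * X).rank = Fintype.card {i // lam i ≠ 0} := hA.rank_eq_card_non_zero_eigs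
    have h2 : (Xᴴ * X).rank = X.rank := by
      rw [Matrix.conjTranspose_eq_transpose_of_trivial, Matrix.rank_transpose_mul_self]
    have hrk : (Finset.univ.filter fun j => lam j ≠ 0).card = X.rank := by
      rw [← Fintype.card_subtype, ← h1, h2]
    have hle : X.rank ≤ min m n :=
      le_min (Matrix.rank_le_height X) (Matrix.rank_le_width X)
    rw [htr, hcard, hrk]
    exact_mod_cast Nat.cast_le.mpr hle
  exact ⟨W, hspec, hinner, hfns⟩

lemma l1Norm_nonneg (Y : Matrix (Fin m) (Fin n) ℝ) : 0 ≤ l1Norm Y :=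
  Finset.sum_nonneg fun _ _ => Finset.sum_nonneg fun _ _ => abs_nonneg _

lemma frobInner_le_l1 (ρ : ℝ) (Y Z : Matrix (Fin m) (Fin n) ℝ) (hZ : ∀ i j, |Z i j| ≤ ρ) :
    frobInner Y Z ≤ ρ * l1Norm Y := by
  rw [frobInner_eq_sum, l1Norm, Finset.mul_sum]
  refine Finset.sum_le_sum fun i _ => ?_
  rw [Finset.mul_sum]
  refine Finset.sum_le_sum fun j _ => ?_
  calc Y i j * Z i j ≤ |Y i j * Z i j| := le_abs_self _
    _ = |Y i j| * |Z i j| := abs_mul _ _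
    _ ≤ |Y i j| * ρ := mul_le_mul_of_nonneg_left (hZ i j) (abs_nonneg _)
    _ = ρ * |Y i j| := mul_comm _ _

lemma fsig_le (σ : ℝ) (hσ : 0 ≤ σ) (X : Matrix (Fin m) (Fin n) ℝ) :
    sSup ((fun W : Matrix (Fin m) (Fin n) ℝ =>
      frobInner X W - σ / 2 * frobNormSq W) '' {W | specNorm W ≤ 1}) ≤ nuclearNorm X := by
  apply Real.sSup_le
  · rintro x ⟨W, hW, rfl⟩
    have h1 := frobInner_le_nuclearNorm X W hW
    have h2 := frobNormSq_nonneg W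
    simp only
    nlinarith
  · exact nuclearNorm_nonneg X

lemma le_fsig (σ : ℝ) (hσ : 0 ≤ σ) (X : Matrix (Fin m) (Fin n) ℝ) :
    nuclearNorm X - σ / 2 * ((min m n : ℕ) : ℝ) ≤
      sSup ((fun W : Matrix (Fin m) (Fin n) ℝ =>
        frobInner X W - σ / 2 * frobNormSq W) '' {W | specNorm W ≤ 1}) := by
  obtain ⟨W, h1, h2, h3⟩ := exists_dual X
  have hbdd : BddAbove ((fun W : Matrix (Fin m) (Fin n) ℝ =>
      frobInner X W - σ / 2 * frobNormSq W) '' {W | specNorm W ≤ 1}) := by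
    refine ⟨nuclearNorm X, ?_⟩
    rintro x ⟨W', hW', rfl⟩
    have ha := frobInner_le_nuclearNorm X W' hW'
    have hb := frobNormSq_nonneg W'
    simp only
    nlinarith
  have hmem : frobInner X W - σ / 2 * frobNormSq W ∈ ((fun W : Matrix (Fin m) (Fin n) ℝ =>
      frobInner X W - σ / 2 * frobNormSq W) '' {W | specNorm W ≤ 1}) := ⟨W, h1, rfl⟩
  have h4 := le_csSup hbdd hmem
  have h5 := frobNormSq_nonneg W
  nlinarith

lemma gsig_le (σ ρ : ℝ) (hσ : 0 ≤ σ) (hρ : 0 ≤ ρ) (Y : Matrix (Fin m) (Fin n) ℝ) :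
    sSup ((fun Z : Matrix (Fin m) (Fin n) ℝ =>
      frobInner Y Z - σ / 2 * frobNormSq Z) '' {Z | ∀ i j, |Z i j| ≤ ρ}) ≤ ρ * l1Norm Y := by
  apply Real.sSup_le
  · rintro x ⟨Z, hZ, rfl⟩
    have h1 := frobInner_le_l1 ρ Y Z hZ
    have h2 := frobNormSq_nonneg Z
    simp only
    nlinarith
  · exact mul_nonneg hρ (l1Norm_nonneg Y)

lemma le_gsig (σ ρ : ℝ) (hσ : 0 ≤ σ) (hρ : 0 ≤ ρ) (Y : Matrix (Fin m) (Fin n) ℝ) :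
    ρ * l1Norm Y - σ / 2 * ((m : ℝ) * n * ρ ^ 2) ≤
      sSup ((fun Z : Matrix (Fin m) (Fin n) ℝ =>
        frobInner Y Z - σ / 2 * frobNormSq Z) '' {Z | ∀ i j, |Z i j| ≤ ρ}) := by
  set Z : Matrix (Fin m) (Fin n) ℝ := Matrix.of fun i j => if 0 ≤ Y i j then ρ else -ρ with hZ
  have hZval : ∀ i j, Z i j = if 0 ≤ Y i j then ρ else -ρ := fun i j => rfl
  have hZb : ∀ i j, |Z i j| ≤ ρ := by
    intro i j
    rw [hZval]
    by_cases h : 0 ≤ Y i j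
    · simp [h, abs_of_nonneg hρ]
    · simp [h, abs_of_nonneg hρ]
  have hZin : frobInner Y Z = ρ * l1Norm Y := by
    rw [frobInner_eq_sum, l1Norm, Finset.mul_sum]
    refine Finset.sum_congr rfl fun i _ => ?_
    rw [Finset.mul_sum]
    refine Finset.sum_congr rfl fun j _ => ?_
    rw [hZval]
    by_cases h : 0 ≤ Y i j
    · rw [if_pos h, abs_of_nonneg h]; ring
    · push_neg at h
      rw [if_neg (not_le.mpr h), abs_of_neg h]; ring
  have hZf : frobNormSq Z = (m : ℝ) * n * ρ ^ 2 := by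
    rw [frobNormSq_eq_sum]
    have hsq : ∀ i j, (Z i j) ^ 2 = ρ ^ 2 := by
      intro i j
      rw [hZval]
      by_cases h : 0 ≤ Y i j
      · rw [if_pos h]
      · rw [if_neg h, neg_sq]
    calc ∑ i, ∑ j, (Z i j) ^ 2 = ∑ i : Fin m, ∑ j : Fin n, ρ ^ 2 := by
          exact Finset.sum_congr rfl fun i _ => Finset.sum_congr rfl fun j _ => hsq i j
      _ = (m : ℝ) * n * ρ ^ 2 := by
          simp [Finset.sum_const, Finset.card_univ]
          ring
  have hbdd : BddAbove ((fun Z : Matrix (Fin m) (Fin n) ℝ =>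
      frobInner Y Z - σ / 2 * frobNormSq Z) '' {Z | ∀ i j, |Z i j| ≤ ρ}) := by
    refine ⟨ρ * l1Norm Y, ?_⟩
    rintro x ⟨Z', hZ', rfl⟩
    have ha := frobInner_le_l1 ρ Y Z' hZ'
    have hb := frobNormSq_nonneg Z'
    simp only
    nlinarith
  have hmem : frobInner Y Z - σ / 2 * frobNormSq Z ∈ ((fun Z : Matrix (Fin m) (Fin n) ℝ =>
      frobInner Y Z - σ / 2 * frobNormSq Z) '' {Z | ∀ i j, |Z i j| ≤ ρ}) := ⟨Z, hZb, rfl⟩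
  have h4 := le_csSup hbdd hmem
  rw [hZin, hZf] at h4
  linarith

end RPCAAux

/-- For RPCA with Nesterov smoothing of both the nuclear norm and the ℓ₁ norm, with
`σ = ε/(2 max{min(m,n), mnρ²})`, an `ε/2`-optimal feasible solution of the smoothed problem is
an `ε`-optimal solution of the original problem. -/
theorem rpca_smoothed_eps_optimal {m n : ℕ} (ρ σ ε : ℝ) (hρ : 0 < ρ) (hε : 0 < ε)
    (hσ : σ = ε / (2 * max ((min m n : ℕ) : ℝ) (m * n * ρ ^ 2)))
    (M : Matrix (Fin m) (Fin n) ℝ)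
    (fσ gσ : Matrix (Fin m) (Fin n) ℝ → ℝ)
    (hfσ : ∀ X, fσ X = sSup ((fun W : Matrix (Fin m) (Fin n) ℝ =>
      frobInner X W - σ / 2 * frobNormSq W) '' {W | specNorm W ≤ 1}))
    (hgσ : ∀ Y, gσ Y = sSup ((fun Z : Matrix (Fin m) (Fin n) ℝ =>
      frobInner Y Z - σ / 2 * frobNormSq Z) '' {Z | ∀ i j, |Z i j| ≤ ρ}))
    -- minimizers of the original and smoothed constrained problems
    (Xstar Ystar : Matrix (Fin m) (Fin n) ℝ) (hfeas : Xstar + Ystar = M)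
    (hopt : ∀ X Y : Matrix (Fin m) (Fin n) ℝ, X + Y = M →
      nuclearNorm Xstar + ρ * l1Norm Ystar ≤ nuclearNorm X + ρ * l1Norm Y)
    (Xstarσ Ystarσ : Matrix (Fin m) (Fin n) ℝ) (hfeasσ : Xstarσ + Ystarσ = M)
    (hoptσ : ∀ X Y : Matrix (Fin m) (Fin n) ℝ, X + Y = M →
      fσ Xstarσ + gσ Ystarσ ≤ fσ X + gσ Y)
    -- (X(σ), Y(σ)) is feasible and ε/2-optimal for the smoothed problem
    (Xσ Yσ : Matrix (Fin m) (Fin n) ℝ) (hfeasXσ : Xσ + Yσ = M)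
    (hXσ : fσ Xσ + gσ Yσ ≤ fσ Xstarσ + gσ Ystarσ + ε / 2) :
    nuclearNorm Xσ + ρ * l1Norm Yσ ≤ nuclearNorm Xstar + ρ * l1Norm Ystar + ε := by
  have hmin0 : (0:ℝ) ≤ ((min m n : ℕ) : ℝ) := Nat.cast_nonneg _
  have hmn0 : (0:ℝ) ≤ (m : ℝ) * n * ρ ^ 2 := by positivity
  set K : ℝ := max ((min m n : ℕ) : ℝ) ((m : ℝ) * (n : ℝ) * ρ ^ 2) with hK
  have hK0 : 0 ≤ K := le_trans hmin0 (le_max_left _ _)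
  have hσ0 : 0 ≤ σ := by
    rw [hσ]
    apply div_nonneg hε.le
    have : ((min m n : ℕ) : ℝ) ≤ max ((min m n : ℕ) : ℝ) ((m : ℝ) * n * ρ ^ 2) := le_max_left _ _
    linarith
  have h1 : ((min m n : ℕ) : ℝ) ≤ K := le_max_left _ _
  have h2 : (m : ℝ) * n * ρ ^ 2 ≤ K := le_max_right _ _
  have hkey : σ / 2 * ((min m n : ℕ) : ℝ) + σ / 2 * ((m : ℝ) * n * ρ ^ 2) ≤ ε / 2 := by
    rcases eq_or_lt_of_le hK0 with h0 | hpos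
    · have ha : ((min m n : ℕ) : ℝ) = 0 := le_antisymm (h1.trans h0.symm.le) hmin0
      have hb : (m : ℝ) * n * ρ ^ 2 = 0 := le_antisymm (h2.trans h0.symm.le) hmn0
      rw [ha, hb]
      simp
      linarith
    · have hσval : σ = ε / (2 * K) := by rw [hσ, hK]
      have hKne : K ≠ 0 := ne_of_gt hpos
      have hsk : σ * K = ε / 2 := by
        rw [hσval]
        field_simp
      nlinarith
  have bf1 : nuclearNorm Xσ ≤ fσ Xσ + σ / 2 * ((min m n : ℕ) : ℝ) := by
    have := RPCAAux.le_fsig σ hσ0 Xσ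
    rw [← hfσ Xσ] at this
    linarith
  have bg1 : ρ * l1Norm Yσ ≤ gσ Yσ + σ / 2 * ((m : ℝ) * n * ρ ^ 2) := by
    have := RPCAAux.le_gsig σ ρ hσ0 hρ.le Yσ
    rw [← hgσ Yσ] at this
    linarith
  have bf2 : fσ Xstar ≤ nuclearNorm Xstar := by
    rw [hfσ Xstar]
    exact RPCAAux.fsig_le σ hσ0 Xstar
  have bg2 : gσ Ystar ≤ ρ * l1Norm Ystar := by
    rw [hgσ Ystar]
    exact RPCAAux.gsig_le σ ρ hσ0 hρ.le Ystar
  have hchain := hoptσ Xstar Ystar hfeas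
  linarith
end

section
/- Consider the RPCA problem with missing data: (P1) min over (X,Y) of ‖X‖_* + ρ‖Y‖₁ subject to P_Ω(X+Y) = P_Ω(M), and the full-constraint reformulation (P2) min over (X,Y) of ‖X‖_* + ρ‖P_Ω(Y)‖₁ subject to X + Y = P_Ω(M). If (X̄, Ȳ) is an optimal solution of (P2), then (X̄, P_Ω(Ȳ)) is an optimal solution of (P1). -/
/-- The projection onto the observed entries `Ω`. -/
def projOmega {m n : ℕ} (Ω : Set (Fin m × Fin n)) [DecidablePred (· ∈ Ω)]
    (X : Matrix (Fin m) (Fin n) ℝ) : Matrix (Fin m) (Fin n) ℝ :=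
  fun i j => if (i, j) ∈ Ω then X i j else 0

/-- If `(X̄, Ȳ)` solves `min ‖X‖_* + ρ‖P_Ω(Y)‖₁ s.t. X + Y = P_Ω(M)`, then
`(X̄, P_Ω(Ȳ))` solves `min ‖X‖_* + ρ‖Y‖₁ s.t. P_Ω(X + Y) = P_Ω(M)`. -/
theorem rpca_missing_data_equiv {m n : ℕ} (ρ : ℝ) (hρ : 0 < ρ)
    (Ω : Set (Fin m × Fin n)) [DecidablePred (· ∈ Ω)]
    (M Xbar Ybar : Matrix (Fin m) (Fin n) ℝ)
    (hfeas : Xbar + Ybar = projOmega Ω M)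
    (hopt : ∀ X Y : Matrix (Fin m) (Fin n) ℝ, X + Y = projOmega Ω M →
      nuclearNorm Xbar + ρ * l1Norm (projOmega Ω Ybar) ≤
        nuclearNorm X + ρ * l1Norm (projOmega Ω Y)) :
    projOmega Ω (Xbar + projOmega Ω Ybar) = projOmega Ω M ∧
    ∀ X Y : Matrix (Fin m) (Fin n) ℝ, projOmega Ω (X + Y) = projOmega Ω M →
      nuclearNorm Xbar + ρ * l1Norm (projOmega Ω Ybar) ≤
        nuclearNorm X + ρ * l1Norm Y := by
  constructor
  · funext i j
    simp only [projOmega, Matrix.add_apply]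
    by_cases h : (i, j) ∈ Ω
    · have := congrFun (congrFun hfeas i) j
      simp only [Matrix.add_apply, projOmega, h, if_true] at this ⊢
      linarith
    · simp [h]
  · intro X Y hXY
    have key := hopt X (projOmega Ω M - X) (by abel)
    refine key.trans ?_
    gcongr ?_ + ρ * ?_ <;> try rfl
    have hYeq : ∀ i j, |projOmega Ω (projOmega Ω M - X) i j| ≤ |Y i j| := by
      intro i j
      have := congrFun (congrFun hXY i) j
      simp only [projOmega, Matrix.add_apply, Matrix.sub_apply] at this ⊢
      by_cases h : (i, j) ∈ Ω
      · simp only [h, if_true] at this ⊢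
        rw [show M i j - X i j = Y i j by linarith]
      · simp [h, abs_nonneg]
    unfold l1Norm
    exact Finset.sum_le_sum fun i _ => Finset.sum_le_sum fun j _ => hYeq i j
end
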